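/- arXiv:2006.16980 — 9 statements merged into one kernel-verified Lean document; each statement's English description precedes it below -/
import Mathlib

section
/- Let ν be a finite Borel measure on ℝ^d, λ ∈ ℝ^d, α ∈ (0, d), R₀ > 0 and C₁ > 0. Suppose that ∫_{ℝ^d} ( ∫_{C_R(0)} ∫_{C_R(0)} e^{2πi⟨z−λ, t−s⟩} ds dt ) dν(z) ≤ C₁² R^{2(d−α)} for all R > R₀ (note the inner double integral is a nonnegative real number). Then there exists C > 0 such that ν(B_r(λ)) ≤ C r^{2α} for all 0 < r < 1/(2R₀), where B_r(λ) is the Euclidean ball of radius r about λ. -/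
open MeasureTheory

noncomputable section

/-- The cube `C_R(0) = [-R, R]^d` in `ℝ^d`. -/
def cube (d : ℕ) (R : ℝ) : Set (EuclideanSpace ℝ (Fin d)) :=
  {t | ∀ i, |t i| ≤ R}


noncomputable def phi (R x : ℝ) : ℝ :=
  if x = 0 then 2*R else Real.sin (2*Real.pi*x*R) / (Real.pi*x)

lemma phi_even (R x : ℝ) : phi R (-x) = phi R x := by
  unfold phi
  by_cases hx : x = 0
  · simp [hx]
  · have h' : -x ≠ 0 := neg_ne_zero.mpr hx
    rw [if_neg h', if_neg hx]
    rw [show 2*Real.pi*(-x)*R = -(2*Real.pi*x*R) by ring, Real.sin_neg]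
    rw [mul_neg, neg_div_neg_eq]

lemma phi_meas (R : ℝ) : Measurable (phi R) := by
  unfold phi
  apply Measurable.ite (measurableSet_eq)
  · exact measurable_const
  · fun_prop

lemma phi_abs_le (R x : ℝ) (hR : 0 ≤ R) : |phi R x| ≤ 2*R := by
  unfold phi
  by_cases hx : x = 0
  · simp [hx, abs_of_nonneg, hR]
  · rw [if_neg hx, abs_div]
    rw [div_le_iff₀ (by positivity : (0:ℝ) < |Real.pi * x|)]
    calc |Real.sin (2*Real.pi*x*R)| ≤ |2*Real.pi*x*R| := Real.abs_sin_le_abs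
      _ = 2*R*|Real.pi*x| := by
          simp [abs_mul, abs_of_nonneg hR, abs_of_nonneg Real.pi_pos.le]
          ring

lemma phi_ge (R x : ℝ) (hR : 0 < R) (hx : |x| ≤ 1/(4*R)) :
    4*R/Real.pi ≤ phi R x := by
  unfold phi
  by_cases h0 : x = 0
  · rw [if_pos h0]
    rw [div_le_iff₀ Real.pi_pos]
    nlinarith [Real.pi_gt_three]
  · rw [if_neg h0]
    have hxabs : 0 < |x| := abs_pos.mpr h0
    have key : Real.sin (2*Real.pi*x*R) / (Real.pi*x)
        = Real.sin (2*Real.pi*(|x|)*R) / (Real.pi*(|x|)) := by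
      rcases abs_choice x with h | h
      · rw [h]
      · rw [h]
        rw [show 2*Real.pi*(-x)*R = -(2*Real.pi*x*R) by ring, Real.sin_neg]
        rw [mul_neg, neg_div_neg_eq]
    rw [key]
    have harg : 2*Real.pi*(|x|)*R ≤ Real.pi/2 := by
      have h1 : |x| * (4*R) ≤ 1 := by
        rw [← le_div_iff₀ (by positivity : (0:ℝ) < 4*R)]; exact hx
      nlinarith [Real.pi_pos]
    have harg0 : 0 ≤ 2*Real.pi*(|x|)*R := by positivity
    have hs := Real.mul_le_sin harg0 harg
    rw [le_div_iff₀ (by positivity : (0:ℝ) < Real.pi*(|x|))]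
    calc 4*R/Real.pi * (Real.pi*(|x|)) = 2/Real.pi * (2*Real.pi*(|x|)*R) := by
          field_simp; ring
      _ ≤ Real.sin (2*Real.pi*(|x|)*R) := hs

lemma oneDim (R : ℝ) (hR : 0 < R) (x : ℝ) :
    ∫ u in Set.Icc (-R) R, Complex.exp (2*Real.pi*Complex.I*((x*u : ℝ):ℂ))
      = (phi R x : ℂ) := by
  have hform : ∀ u : ℝ, (2*Real.pi*Complex.I*((x*u : ℝ):ℂ))
      = ((2*Real.pi*x : ℝ):ℂ) * Complex.I * (u:ℂ) := by
    intro u; push_cast; ring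
  rw [MeasureTheory.integral_Icc_eq_integral_Ioc,
    ← intervalIntegral.integral_of_le (by linarith : -R ≤ R)]
  simp_rw [hform]
  by_cases hx : x = 0
  · simp [hx, phi, intervalIntegral.integral_const]
    ring
  · have hc : ((2*Real.pi*x : ℝ):ℂ) * Complex.I ≠ 0 := by
      simp [Complex.ext_iff, Real.pi_ne_zero, hx]
    rw [integral_exp_mul_complex hc]
    have h1 : ((2*Real.pi*x : ℝ):ℂ) * Complex.I * (R:ℂ)
        = ((2*Real.pi*x*R : ℝ):ℂ) * Complex.I := by push_cast; ring
    have h2 : ((2*Real.pi*x : ℝ):ℂ) * Complex.I * ((-R : ℝ):ℂ)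
        = ((-(2*Real.pi*x*R) : ℝ):ℂ) * Complex.I := by push_cast; ring
    rw [h1, h2, Complex.exp_mul_I, Complex.exp_mul_I]
    simp only [phi, hx, if_false]
    rw [div_eq_iff hc]
    push_cast
    simp only [Complex.cos_neg, Complex.sin_neg, Complex.ofReal_sin]
    have hπ : (Real.pi : ℂ) ≠ 0 := by exact_mod_cast Real.pi_ne_zero
    have hxc : (x : ℂ) ≠ 0 := by exact_mod_cast hx
    field_simp
    ring_nf

lemma cube_measurableSet (d : ℕ) (R : ℝ) : MeasurableSet (cube d R) := by
  have : cube d R = ⋂ i, {t : EuclideanSpace ℝ (Fin d) | |t i| ≤ R} := by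
    ext t; simp [cube]
  rw [this]
  apply MeasurableSet.iInter
  intro i
  have hc : Continuous fun t : EuclideanSpace ℝ (Fin d) => |t i| := by
    fun_prop
  exact measurableSet_le hc.measurable measurable_const

lemma cube_integral (d : ℕ) (R : ℝ) (hR : 0 < R) (x : Fin d → ℝ) :
    (∫ t in cube d R, Complex.exp (2*Real.pi*Complex.I*((∑ i, x i * t i : ℝ):ℂ)))
      = ((∏ i, phi R (x i) : ℝ) : ℂ) := by
  have e := (EuclideanSpace.volume_preserving_symm_measurableEquiv_toLp (Fin d)).symm
  rw [← e.setIntegral_preimage_emb (MeasurableEquiv.measurableEmbedding _)]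
  have hpre : (MeasurableEquiv.toLp 2 (Fin d → ℝ)).symm.symm ⁻¹' (cube d R)
      = Set.pi Set.univ (fun _ : Fin d => Set.Icc (-R) R) := by
    ext y
    simp only [Set.mem_preimage, cube, Set.mem_setOf_eq, Set.mem_pi, Set.mem_univ,
      Set.mem_Icc, forall_true_left, MeasurableEquiv.symm_symm, MeasurableEquiv.coe_toLp,
      abs_le, true_implies]
  rw [hpre]
  have hval : ∀ y : Fin d → ℝ,
      Complex.exp (2*Real.pi*Complex.I*((∑ i, x i * ((MeasurableEquiv.toLp 2 (Fin d → ℝ)).symm.symm y) i : ℝ):ℂ))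
        = ∏ i, Complex.exp (2*Real.pi*Complex.I*((x i * y i : ℝ):ℂ)) := by
    intro y
    rw [← Complex.exp_sum]
    congr 1
    simp only [MeasurableEquiv.symm_symm, MeasurableEquiv.coe_toLp]
    push_cast
    rw [Finset.mul_sum]
  simp_rw [hval]
  rw [← MeasureTheory.integral_indicator (MeasurableSet.univ_pi fun _ => measurableSet_Icc)]
  have hind : (Set.indicator (Set.pi Set.univ (fun _ : Fin d => Set.Icc (-R) R))
      fun y : Fin d → ℝ => ∏ i, Complex.exp (2*Real.pi*Complex.I*((x i * y i : ℝ):ℂ)))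
      = fun y : Fin d → ℝ => ∏ i,
          (Set.Icc (-R) R).indicator (fun u => Complex.exp (2*Real.pi*Complex.I*((x i * u : ℝ):ℂ))) (y i) := by
    funext y
    by_cases hy : y ∈ Set.pi Set.univ (fun _ : Fin d => Set.Icc (-R) R)
    · rw [Set.indicator_of_mem hy]
      have : ∀ i, y i ∈ Set.Icc (-R) R := fun i => hy i (Set.mem_univ i)
      exact Finset.prod_congr rfl fun i _ => (Set.indicator_of_mem (this i)
        (fun u => Complex.exp (2*Real.pi*Complex.I*((x i * u : ℝ):ℂ)))).symm
    · rw [Set.indicator_of_notMem hy]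
      have hy' : ¬ ∀ i, y i ∈ Set.Icc (-R) R := fun h => hy (fun i _ => h i)
      push_neg at hy'
      obtain ⟨i, hi⟩ := hy'
      exact (Finset.prod_eq_zero (Finset.mem_univ i) (Set.indicator_of_notMem hi _)).symm
  rw [hind]
  beta_reduce
  rw [MeasureTheory.volume_pi]
  rw [MeasureTheory.integral_fintype_prod_eq_prod (ι := Fin d) (μ := fun _ => volume)
    (f := fun i u => (Set.Icc (-R) R).indicator (fun v => Complex.exp (2*Real.pi*Complex.I*((x i * v : ℝ):ℂ))) u)]
  rw [Complex.ofReal_prod]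
  apply Finset.prod_congr rfl
  intro i _
  rw [MeasureTheory.integral_indicator measurableSet_Icc, oneDim R hR (x i)]

lemma double_integral (d : ℕ) (R : ℝ) (hR : 0 < R) (x : Fin d → ℝ) :
    (∫ t in cube d R, ∫ s in cube d R,
        Complex.exp (2*Real.pi*Complex.I*((∑ i, x i * (t i - s i) : ℝ):ℂ)))
      = ((∏ i, (phi R (x i))^2 : ℝ) : ℂ) := by
  have hsplit : ∀ t s : EuclideanSpace ℝ (Fin d),
      Complex.exp (2*Real.pi*Complex.I*((∑ i, x i * (t i - s i) : ℝ):ℂ))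
        = Complex.exp (2*Real.pi*Complex.I*((∑ i, x i * t i : ℝ):ℂ))
          * Complex.exp (2*Real.pi*Complex.I*((∑ i, (fun j => -x j) i * s i : ℝ):ℂ)) := by
    intro t s
    rw [← Complex.exp_add]
    congr 1
    push_cast
    rw [← mul_add]
    congr 1
    rw [← Finset.sum_add_distrib]
    exact Finset.sum_congr rfl fun i _ => by ring
  simp_rw [hsplit, MeasureTheory.integral_const_mul,
    cube_integral d R hR (fun j => -x j), MeasureTheory.integral_mul_const,
    cube_integral d R hR x]
  rw [show (∏ i, phi R ((fun j => -x j) i)) = ∏ i, phi R (x i) from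
    Finset.prod_congr rfl fun i _ => phi_even R (x i)]
  push_cast
  rw [← Finset.prod_mul_distrib]
  exact Finset.prod_congr rfl fun i _ => by ring

lemma coord_le_dist (d : ℕ) (z lam : EuclideanSpace ℝ (Fin d)) (i : Fin d) :
    |z i - lam i| ≤ dist z lam := by
  rw [EuclideanSpace.dist_eq, ← Real.sqrt_sq_eq_abs]
  apply Real.sqrt_le_sqrt
  have := Finset.single_le_sum (f := fun j => dist (z j) (lam j) ^ 2)
    (fun j _ => sq_nonneg _) (Finset.mem_univ i)
  simpa [Real.dist_eq] using this

lemma coord_meas (d : ℕ) (i : Fin d) :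
    Measurable fun z : EuclideanSpace ℝ (Fin d) => z i := by
  fun_prop

lemma alg (r α : ℝ) (d : ℕ) (hr : 0 < r) :
    (1/(4*r)) ^ (2*((d:ℝ)-α))
      = ((Real.pi/4)^(2*d) * 4 ^ (2*α) * r ^ (2*α)) * ((4*(1/(4*r))/Real.pi)^2)^d := by
  have hπ := Real.pi_pos
  have e1 : 4*(1/(4*r))/Real.pi = 1/(Real.pi*r) := by field_simp
  rw [e1, ← pow_mul]
  rw [← Real.rpow_natCast (1/(Real.pi*r)) (2*d), ← Real.rpow_natCast (Real.pi/4) (2*d)]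
  rw [Real.rpow_def_of_pos (by positivity : (0:ℝ) < 1/(4*r)),
      Real.rpow_def_of_pos (by positivity : (0:ℝ) < Real.pi/4),
      Real.rpow_def_of_pos (by positivity : (0:ℝ) < (4:ℝ)),
      Real.rpow_def_of_pos hr,
      Real.rpow_def_of_pos (by positivity : (0:ℝ) < 1/(Real.pi*r)),
      ← Real.exp_add, ← Real.exp_add, ← Real.exp_add]
  congr 1
  rw [one_div, Real.log_inv, Real.log_mul (by positivity) (ne_of_gt hr),
      one_div, Real.log_inv, Real.log_mul (ne_of_gt Real.pi_pos) (ne_of_gt hr),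
      Real.log_div (ne_of_gt Real.pi_pos) (by norm_num)]
  push_cast
  ring

/-- If the integral against `ν` of the double cube integral of `e^{2πi⟨z-λ, t-s⟩}`
(a nonnegative real number) is at most `C₁² R^{2(d-α)}` for all `R > R₀`, then
`ν(B_r(λ)) ≤ C r^{2α}` for all `0 < r < 1/(2R₀)`. -/
theorem measure_ball_bound_of_kernel_integral_bound
    {d : ℕ} (hd : 1 ≤ d)
    (ν : Measure (EuclideanSpace ℝ (Fin d))) [IsFiniteMeasure ν]
    (lam : EuclideanSpace ℝ (Fin d)) (α : ℝ) (hα : 0 < α) (hαd : α < d)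
    (R₀ C₁ : ℝ) (hR₀ : 0 < R₀) (hC₁ : 0 < C₁)
    (hbound : ∀ R, R₀ < R →
      (∫ z, (∫ t in cube d R, ∫ s in cube d R,
          Complex.exp (2 * Real.pi * Complex.I
            * ((∑ i, (z i - lam i) * (t i - s i) : ℝ) : ℂ))) ∂ν).re
        ≤ C₁ ^ 2 * R ^ (2 * ((d : ℝ) - α))) :
    ∃ C > 0, ∀ r : ℝ, 0 < r → r < 1 / (2 * R₀) →
      ν (Metric.ball lam r) ≤ ENNReal.ofReal (C * r ^ (2 * α)) := by
  set A : ℝ := C₁^2 * (Real.pi/4)^(2*d) * 4 ^ (2*α) with hA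
  set B : ℝ := (ν Set.univ).toReal * (4*R₀) ^ (2*α) with hB
  have hApos : 0 < A := by positivity
  have hBnn : 0 ≤ B := by positivity
  refine ⟨A + B, by positivity, ?_⟩
  intro r hr hr'
  rw [← ENNReal.ofReal_toReal (measure_ne_top ν (Metric.ball lam r))]
  apply ENNReal.ofReal_le_ofReal
  have hrpow : 0 < r ^ (2*α) := Real.rpow_pos_of_pos hr _
  by_cases hcase : r < 1/(4*R₀)
  · -- main case
    set R : ℝ := 1/(4*r) with hRdef
    have hRpos : 0 < R := by positivity
    have hRR₀ : R₀ < R := by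
      rw [hRdef, lt_div_iff₀ (by positivity)]
      rw [lt_div_iff₀ (by positivity : (0:ℝ) < 4*R₀)] at hcase
      linarith
    set g : EuclideanSpace ℝ (Fin d) → ℝ :=
      fun z => ∏ i, (phi R (z i - lam i))^2 with hg
    have hgnn : ∀ z, 0 ≤ g z := fun z => Finset.prod_nonneg fun i _ => sq_nonneg _
    have hgmeas : Measurable g := by
      apply Finset.measurable_prod
      intro i _
      exact (((phi_meas R).comp ((coord_meas d i).sub measurable_const)).pow_const 2)
    have hgle : ∀ z, g z ≤ ((2*R)^2)^d := by
      intro z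
      calc g z ≤ ∏ _i : Fin d, (2*R)^2 := by
            apply Finset.prod_le_prod (fun i _ => sq_nonneg _)
            intro i _
            have h := phi_abs_le R (z i - lam i) hRpos.le
            have h1 := abs_le.mp h
            nlinarith [h1.1, h1.2]
        _ = ((2*R)^2)^d := by rw [Finset.prod_const, Finset.card_univ, Fintype.card_fin]
    have hgint : Integrable g ν := by
      apply Integrable.mono' (integrable_const (((2*R)^2)^d)) hgmeas.aestronglyMeasurable
      filter_upwards with z
      rw [Real.norm_eq_abs, abs_of_nonneg (hgnn z)]
      exact hgle z
    have hInt : (∫ z, (∫ t in cube d R, ∫ s in cube d R,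
          Complex.exp (2 * Real.pi * Complex.I
            * ((∑ i, (z i - lam i) * (t i - s i) : ℝ) : ℂ))) ∂ν).re
        = ∫ z, g z ∂ν := by
      have : (∫ z, (∫ t in cube d R, ∫ s in cube d R,
          Complex.exp (2 * Real.pi * Complex.I
            * ((∑ i, (z i - lam i) * (t i - s i) : ℝ) : ℂ))) ∂ν)
          = ∫ z, ((g z : ℝ) : ℂ) ∂ν := by
        apply integral_congr_ae
        filter_upwards with z
        exact double_integral d R hRpos (fun i => z i - lam i)
      rw [this]
      have hgc : Integrable (fun z => ((g z : ℝ) : ℂ)) ν := hgint.ofReal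
      rw [← RCLike.re_to_complex, ← integral_re hgc]
      simp [RCLike.re_to_complex]
    have hr14R : r = 1/(4*R) := by rw [hRdef]; field_simp
    have hlow : ∀ z ∈ Metric.ball lam r, ((4*R/Real.pi)^2)^d ≤ g z := by
      intro z hz
      calc ((4*R/Real.pi)^2)^d = ∏ _i : Fin d, (4*R/Real.pi)^2 := by
            rw [Finset.prod_const, Finset.card_univ, Fintype.card_fin]
        _ ≤ g z := by
            apply Finset.prod_le_prod (fun i _ => sq_nonneg _)
            intro i _
            have hzi : |z i - lam i| ≤ 1/(4*R) := by
              rw [← hr14R]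
              exact le_of_lt (lt_of_le_of_lt (coord_le_dist d z lam i) hz)
            have := phi_ge R (z i - lam i) hRpos hzi
            have h0 : (0:ℝ) ≤ 4*R/Real.pi := by positivity
            nlinarith
    have hchain : ((4*R/Real.pi)^2)^d * (ν (Metric.ball lam r)).toReal
        ≤ C₁ ^ 2 * R ^ (2 * ((d : ℝ) - α)) := by
      calc ((4*R/Real.pi)^2)^d * (ν (Metric.ball lam r)).toReal
          = ∫ _z in Metric.ball lam r, ((4*R/Real.pi)^2)^d ∂ν := by
            rw [setIntegral_const, smul_eq_mul, measureReal_def]; ring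
        _ ≤ ∫ z in Metric.ball lam r, g z ∂ν := by
            apply setIntegral_mono_on (integrableOn_const (measure_ne_top ν _))
              hgint.integrableOn measurableSet_ball hlow
        _ ≤ ∫ z, g z ∂ν := setIntegral_le_integral hgint
            (Filter.Eventually.of_forall hgnn)
        _ ≤ C₁ ^ 2 * R ^ (2 * ((d : ℝ) - α)) := by
            rw [← hInt]; exact hbound R hRR₀
    have hkey : C₁ ^ 2 * R ^ (2 * ((d : ℝ) - α)) = A * r ^ (2*α) * ((4*R/Real.pi)^2)^d := by
      rw [hRdef, alg r α d hr, hA]; ring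
    have hcpos : 0 < ((4*R/Real.pi)^2)^d := by positivity
    have : (ν (Metric.ball lam r)).toReal ≤ A * r ^ (2*α) := by
      rw [hkey] at hchain
      calc (ν (Metric.ball lam r)).toReal
          = ((4*R/Real.pi)^2)^d * (ν (Metric.ball lam r)).toReal / ((4*R/Real.pi)^2)^d := by
            field_simp
        _ ≤ A * r ^ (2*α) * ((4*R/Real.pi)^2)^d / ((4*R/Real.pi)^2)^d := by
            exact (div_le_div_iff_of_pos_right hcpos).mpr hchain
        _ = A * r ^ (2*α) := by field_simp
    nlinarith [this, hBnn, hrpow]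
  · -- trivial case
    push_neg at hcase
    have h1 : (1:ℝ) ≤ 4*R₀*r := by
      rw [div_le_iff₀ (by positivity : (0:ℝ) < 4*R₀)] at hcase
      linarith
    have h2 : (1:ℝ) ≤ (4*R₀*r) ^ (2*α) :=
      Real.one_le_rpow (by linarith) (by positivity)
    have h3 : (ν (Metric.ball lam r)).toReal ≤ (ν Set.univ).toReal := by
      apply ENNReal.toReal_mono (measure_ne_top ν _)
      exact measure_mono (Set.subset_univ _)
    have h4 : B * r ^ (2*α) = (ν Set.univ).toReal * (4*R₀*r) ^ (2*α) := by
      rw [hB, mul_assoc, ← Real.mul_rpow (by positivity) hr.le]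
    have h5 : (ν Set.univ).toReal ≤ B * r ^ (2*α) := by
      rw [h4]
      nlinarith [ENNReal.toReal_nonneg (a := ν Set.univ), h2]
    nlinarith [hApos, hrpow]
end
end

section
/- Let r ≥ 1 and let a_1, …, a_k ∈ ℤ^r be vectors whose integer span is all of ℤ^r. Then there exists a constant C > 0 such that for every z ∈ ℝ^r, C · dist(z, ℤ^r) ≤ max_{1 ≤ j ≤ k} ‖⟨a_j, z⟩‖_{ℝ/ℤ}, where dist(z, ℤ^r) = min_{m ∈ ℤ^r} ‖z − m‖ is the Euclidean distance from z to the integer lattice. -/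
open MeasureTheory

noncomputable section

def distToInt (x : ℝ) : ℝ := |x - round x|

lemma distToInt_nonneg (x : ℝ) : 0 ≤ distToInt x := abs_nonneg _

lemma distToInt_le (x : ℝ) (m : ℤ) : distToInt x ≤ |x - m| := by
  by_cases h : m = round x
  · simp [distToInt, h]
  · have h1 : (1 : ℝ) ≤ |(m : ℝ) - round x| := by
      have : (1 : ℤ) ≤ |m - round x| := Int.one_le_abs (sub_ne_zero.mpr h)
      calc (1:ℝ) ≤ (|m - round x| : ℤ) := by exact_mod_cast this
        _ = |(m : ℝ) - round x| := by push_cast; rfl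
    have h2 : |x - round x| ≤ 1/2 := abs_sub_round x
    have h3 : |(m : ℝ) - round x| ≤ |(m:ℝ) - x| + |x - round x| := abs_sub_le _ _ _
    have h4 : |(m:ℝ) - x| = |x - m| := abs_sub_comm _ _
    unfold distToInt
    linarith
  
lemma distToInt_add_le (x y : ℝ) : distToInt (x + y) ≤ distToInt x + distToInt y := by
  calc distToInt (x + y) ≤ |x + y - (round x + round y : ℤ)| := distToInt_le _ _
    _ ≤ distToInt x + distToInt y := by
        unfold distToInt; push_cast
        have : x + y - ((round x : ℝ) + round y) = (x - round x) + (y - round y) := by ring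
        rw [this]; exact abs_add_le _ _

lemma distToInt_int_mul (n : ℤ) (x : ℝ) : distToInt ((n : ℝ) * x) ≤ |(n : ℝ)| * distToInt x := by
  calc distToInt ((n:ℝ) * x) ≤ |(n:ℝ) * x - (n * round x : ℤ)| := distToInt_le _ _
    _ = |(n:ℝ)| * distToInt x := by
        unfold distToInt; push_cast
        rw [← abs_mul]; ring_nf

lemma distToInt_sum_le {ι : Type*} (s : Finset ι) (f : ι → ℝ) :
    distToInt (∑ j ∈ s, f j) ≤ ∑ j ∈ s, distToInt (f j) := by
  induction s using Finset.cons_induction with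
  | empty => simp [distToInt]
  | cons a s ha ih =>
      rw [Finset.sum_cons, Finset.sum_cons]
      exact (distToInt_add_le _ _).trans (by gcongr)

/-- If the integer vectors `a_1, …, a_k` span `ℤ^r`, then there is a constant `C > 0` such
that for every `z ∈ ℝ^r`, `C · dist(z, ℤ^r) ≤ max_j ‖⟨a_j, z⟩‖_{ℝ/ℤ}`. -/
theorem dist_to_lattice_le_max_inner_distToInt
    {r : ℕ} (hr : 1 ≤ r) {k : ℕ} (hk : 1 ≤ k)
    (a : Fin k → Fin r → ℤ)
    (hspan : Submodule.span ℤ (Set.range a) = ⊤) :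
    ∃ C > 0, ∀ z : EuclideanSpace ℝ (Fin r),
      C * Metric.infDist z
          (Set.range fun m : Fin r → ℤ => (WithLp.toLp 2 (fun i => (m i : ℝ)) : EuclideanSpace ℝ (Fin r)))
        ≤ ⨆ j : Fin k, distToInt (∑ i, (a j i : ℝ) * z i) := by
  -- coefficients expressing each standard basis vector
  have hc : ∀ i : Fin r, ∃ c : Fin k → ℤ, ∑ j, c j • a j = Pi.single i 1 := by
    intro i
    have hmem : (Pi.single i 1 : Fin r → ℤ) ∈ Submodule.span ℤ (Set.range a) := by
      rw [hspan]; trivial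
    rwa [Submodule.mem_span_range_iff_exists_fun] at hmem
  choose c hcc using hc
  set B : ℝ := 1 + ∑ i : Fin r, ∑ j : Fin k, (|c i j| : ℝ) with hB
  have hBpos : 0 < B := by
    have : (0:ℝ) ≤ ∑ i : Fin r, ∑ j : Fin k, (|c i j| : ℝ) := by positivity
    linarith
  have hsr : 0 < Real.sqrt r := Real.sqrt_pos.mpr (by exact_mod_cast hr)
  refine ⟨1 / (Real.sqrt r * B), by positivity, fun z => ?_⟩
  set S : ℝ := ⨆ j : Fin k, distToInt (∑ i, (a j i : ℝ) * z i) with hSdef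
  have hbdd : BddAbove (Set.range fun j : Fin k => distToInt (∑ i, (a j i : ℝ) * z i)) :=
    Set.Finite.bddAbove (Set.finite_range _)
  have hle : ∀ j : Fin k, distToInt (∑ i, (a j i : ℝ) * z i) ≤ S := fun j => le_ciSup hbdd j
  have hS0 : 0 ≤ S := le_trans (distToInt_nonneg _) (hle ⟨0, hk⟩)
  -- coordinatewise bound
  have hzi : ∀ i : Fin r, distToInt (z i) ≤ B * S := by
    intro i
    have h1 : ∀ l : Fin r, (∑ j, c i j * a j l) = (Pi.single i 1 : Fin r → ℤ) l := by
      intro l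
      have := congrFun (hcc i) l
      simpa using this
    have key : z i = ∑ j, (c i j : ℝ) * (∑ l, (a j l : ℝ) * z l) := by
      have : ∑ j, (c i j : ℝ) * (∑ l, (a j l : ℝ) * z l)
          = ∑ l, ((∑ j, c i j * a j l : ℤ) : ℝ) * z l := by
        push_cast
        simp only [Finset.mul_sum, Finset.sum_mul]
        rw [Finset.sum_comm]
        exact Finset.sum_congr rfl fun l _ => Finset.sum_congr rfl fun j _ => by ring
      rw [this]
      simp only [h1]
      simp [Pi.single_apply]
    calc distToInt (z i) = distToInt (∑ j, (c i j : ℝ) * (∑ l, (a j l : ℝ) * z l)) := by rw [← key]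
      _ ≤ ∑ j, distToInt ((c i j : ℝ) * (∑ l, (a j l : ℝ) * z l)) := distToInt_sum_le _ _
      _ ≤ ∑ j, |(c i j : ℝ)| * S := by
          apply Finset.sum_le_sum
          intro j _
          exact (distToInt_int_mul _ _).trans (mul_le_mul_of_nonneg_left (hle j) (abs_nonneg _))
      _ = (∑ j, (|c i j| : ℝ)) * S := by push_cast [Finset.sum_mul]; rfl
      _ ≤ B * S := by
          apply mul_le_mul_of_nonneg_right _ hS0
          rw [hB]
          have h2 : (∑ j, (|c i j| : ℝ)) ≤ ∑ i' : Fin r, ∑ j : Fin k, (|c i' j| : ℝ) := by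
            apply Finset.single_le_sum (f := fun i' => ∑ j : Fin k, (|c i' j| : ℝ))
            · intro i' _; positivity
            · exact Finset.mem_univ i
          linarith
  -- distance to lattice bound
  have hdist : Metric.infDist z
      (Set.range fun m : Fin r → ℤ => (WithLp.toLp 2 (fun i => (m i : ℝ)) : EuclideanSpace ℝ (Fin r)))
      ≤ Real.sqrt r * (B * S) := by
    have hmem : (WithLp.toLp 2 (fun i => ((round (z i) : ℤ) : ℝ)) : EuclideanSpace ℝ (Fin r)) ∈
        Set.range fun m : Fin r → ℤ => (WithLp.toLp 2 (fun i => (m i : ℝ)) : EuclideanSpace ℝ (Fin r)) :=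
      ⟨fun i => round (z i), rfl⟩
    refine le_trans (Metric.infDist_le_dist_of_mem hmem) ?_
    rw [EuclideanSpace.dist_eq]
    have hsum : ∑ i, dist (z i) ((round (z i) : ℝ)) ^ 2 ≤ (r : ℝ) * (B * S) ^ 2 := by
      calc ∑ i, dist (z i) ((round (z i) : ℝ)) ^ 2 ≤ ∑ _i : Fin r, (B * S) ^ 2 := by
            apply Finset.sum_le_sum
            intro i _
            have h1 : dist (z i) ((round (z i) : ℝ)) = distToInt (z i) := by
              rw [Real.dist_eq]; rfl
            rw [h1]
            have := hzi i
            nlinarith [distToInt_nonneg (z i)]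
        _ = (r : ℝ) * (B * S) ^ 2 := by simp [mul_comm]
    calc Real.sqrt (∑ i, dist (z i) ((round (z i) : ℝ)) ^ 2)
        ≤ Real.sqrt ((r : ℝ) * (B * S) ^ 2) := Real.sqrt_le_sqrt hsum
      _ = Real.sqrt r * (B * S) := by
          rw [Real.sqrt_mul (by positivity), Real.sqrt_sq (by positivity)]
  rw [div_mul_eq_mul_div, one_mul, div_le_iff₀ (by positivity)]
  calc Metric.infDist z _ ≤ Real.sqrt r * (B * S) := hdist
    _ = S * (Real.sqrt r * B) := by ring
end
end

section
/- Let n ≥ 2, let θ_1, …, θ_n be real numbers, and let p ≠ q be two indices in {1, …, n}. Then |∑_{k=1}^n e^{2πiθ_k}| ≤ n − (1/2)‖θ_p − θ_q‖²_{ℝ/ℤ}. -/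
noncomputable section

lemma pair_norm_le (a b : ℝ) :
    ‖Complex.exp (2 * Real.pi * Complex.I * (a : ℂ)) +
      Complex.exp (2 * Real.pi * Complex.I * (b : ℂ))‖ ≤ 2 - (1 / 2) * distToInt (a - b) ^ 2 := by
  set y : ℝ := (a - b) - round (a - b) with hy
  have hyabs : |y| ≤ 1 / 2 := by
    have := abs_sub_round (a - b)
    simpa [hy] using this
  -- factor
  have hfactor : Complex.exp (2 * Real.pi * Complex.I * (a : ℂ)) +
      Complex.exp (2 * Real.pi * Complex.I * (b : ℂ)) =
      Complex.exp (Real.pi * (a + b) * Complex.I) * (2 * Complex.cos (Real.pi * (a - b))) := by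
    rw [Complex.two_cos, mul_add, ← Complex.exp_add, ← Complex.exp_add]
    ring_nf
  rw [hfactor, norm_mul]
  have h1 : ‖Complex.exp ((Real.pi * (a + b) : ℝ) * Complex.I)‖ = 1 := by
    rw [Complex.norm_exp_ofReal_mul_I]
  have h1' : ‖Complex.exp ((Real.pi : ℂ) * ((a : ℂ) + b) * Complex.I)‖ = 1 := by
    rw [← h1]; norm_cast
  rw [h1', one_mul]
  have h2 : (2 * Complex.cos (Real.pi * (a - b)) : ℂ) =
      ((2 * Real.cos (Real.pi * (a - b)) : ℝ) : ℂ) := by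
    push_cast; ring
  rw [h2, Complex.norm_real, Real.norm_eq_abs, abs_mul, abs_two]
  -- |cos(π(a-b))| = |cos(π y)|
  have hcos : |Real.cos (Real.pi * (a - b))| = |Real.cos (Real.pi * y)| := by
    have : Real.pi * (a - b) = Real.pi * y + (round (a - b)) * Real.pi := by
      rw [hy]; ring
    rw [this, Real.cos_add_int_mul_pi, abs_mul]
    have h4 : |((-1:ℝ)) ^ round (a - b)| = 1 := by
      rcases Int.even_or_odd (round (a - b)) with h | h
      · rw [h.neg_one_zpow]; simp
      · rw [h.neg_one_zpow]; simp
    rw [h4, one_mul]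
  rw [hcos]
  have hcosnn : 0 ≤ Real.cos (Real.pi * y) := by
    apply Real.cos_nonneg_of_mem_Icc
    constructor
    · nlinarith [abs_le.1 hyabs, Real.pi_pos]
    · nlinarith [abs_le.1 hyabs, Real.pi_pos]
  rw [abs_of_nonneg hcosnn]
  have hbound : Real.cos (Real.pi * y) ≤ 1 - 2 / Real.pi ^ 2 * (Real.pi * y) ^ 2 := by
    apply Real.cos_le_one_sub_mul_cos_sq
    rw [abs_mul, abs_of_pos Real.pi_pos]
    nlinarith [abs_le.1 hyabs, Real.pi_pos, abs_nonneg y]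
  have hpi : (0:ℝ) < Real.pi ^ 2 := by positivity
  have hbound' : Real.cos (Real.pi * y) ≤ 1 - 2 * y ^ 2 := by
    have e : 2 / Real.pi ^ 2 * (Real.pi * y) ^ 2 = 2 * y ^ 2 := by
      field_simp
    rw [e] at hbound; exact hbound
  have hd : distToInt (a - b) ^ 2 = y ^ 2 := by
    rw [distToInt, ← hy, sq_abs]
  rw [hd]
  clear_value y
  linarith [hbound', sq_nonneg y]

/-- For `n ≥ 2` phases and two distinct indices `p ≠ q`,
`|∑_k e^{2πiθ_k}| ≤ n - (1/2)‖θ_p - θ_q‖²_{ℝ/ℤ}`. -/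
theorem abs_sum_exp_le {n : ℕ} (hn : 2 ≤ n) (θ : Fin n → ℝ) (p q : Fin n) (hpq : p ≠ q) :
    ‖∑ k, Complex.exp (2 * Real.pi * Complex.I * ((θ k : ℝ) : ℂ))‖
      ≤ n - (1 / 2) * distToInt (θ p - θ q) ^ 2 := by
  classical
  set f : Fin n → ℂ := fun k => Complex.exp (2 * Real.pi * Complex.I * ((θ k : ℝ) : ℂ)) with hf
  have hq : q ∈ (Finset.univ.erase p) := Finset.mem_erase.2 ⟨hpq.symm, Finset.mem_univ q⟩
  have hsplit : ∑ k, f k = (f p + f q) + ∑ k ∈ (Finset.univ.erase p).erase q, f k := by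
    rw [← Finset.add_sum_erase _ f (Finset.mem_univ p), ← Finset.add_sum_erase _ f hq]
    ring
  rw [hsplit]
  have hcard : ((Finset.univ.erase p).erase q).card = n - 2 := by
    rw [Finset.card_erase_of_mem hq, Finset.card_erase_of_mem (Finset.mem_univ p)]
    simp only [Finset.card_univ, Fintype.card_fin]
    omega
  have hrest : ‖∑ k ∈ (Finset.univ.erase p).erase q, f k‖ ≤ (n : ℝ) - 2 := by
    calc ‖∑ k ∈ (Finset.univ.erase p).erase q, f k‖
        ≤ ∑ k ∈ (Finset.univ.erase p).erase q, ‖f k‖ := norm_sum_le _ _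
      _ = ∑ k ∈ (Finset.univ.erase p).erase q, (1:ℝ) := by
          apply Finset.sum_congr rfl
          intro k _
          rw [hf]
          simp only
          rw [Complex.norm_exp]
          have : (2 * ↑Real.pi * Complex.I * ((θ k : ℝ) : ℂ)).re = 0 := by simp
          rw [this, Real.exp_zero]
      _ = ((n : ℝ) - 2) := by
          rw [Finset.sum_const, hcard, nsmul_eq_mul, Nat.cast_sub hn]
          push_cast
          ring
  calc ‖(f p + f q) + ∑ k ∈ (Finset.univ.erase p).erase q, f k‖
      ≤ ‖f p + f q‖ + ‖∑ k ∈ (Finset.univ.erase p).erase q, f k‖ := norm_add_le _ _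
    _ ≤ (2 - (1 / 2) * distToInt (θ p - θ q) ^ 2) + ((n : ℝ) - 2) := by
        gcongr
        exact pair_norm_le (θ p) (θ q)
    _ = n - (1 / 2) * distToInt (θ p - θ q) ^ 2 := by ring
end
end

section
/- Let d ≥ 1, let g : ℝ^d → ℂ be continuously differentiable, let λ ∈ ℝ^d, and let ℓ ∈ {1, …, d} be an index with λ_ℓ ≠ 0. Then for every R > 0, |∫_{C_R(0)} e^{2πi⟨λ,t⟩} g(t) dt| ≤ (1/(2π|λ_ℓ|)) · ( 2(2R)^{d−1} · sup_{t ∈ C_R(0)} |g(t)| + |∫_{C_R(0)} e^{2πi⟨λ,t⟩} (∂g/∂t_ℓ)(t) dt| ). -/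
open MeasureTheory

noncomputable section

set_option maxHeartbeats 1000000 in
/-- One integration by parts for twisted integrals: if `λ_ℓ ≠ 0`, the twisted integral of a
`C¹` function `g` is bounded by `(1/(2π|λ_ℓ|))` times a boundary term plus the twisted
integral of `∂g/∂t_ℓ`. -/
theorem twisted_integral_integration_by_parts
    {d : ℕ} (hd : 1 ≤ d) (g : EuclideanSpace ℝ (Fin d) → ℂ)
    (hg : ContDiff ℝ 1 g) (lam : EuclideanSpace ℝ (Fin d)) (ℓ : Fin d)
    (hℓ : lam ℓ ≠ 0) (R : ℝ) (hR : 0 < R) :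
    ‖∫ t in cube d R,
        Complex.exp (2 * Real.pi * Complex.I * ((∑ i, lam i * t i : ℝ) : ℂ)) * g t‖
      ≤ (1 / (2 * Real.pi * |lam ℓ|)) *
        (2 * (2 * R) ^ (d - 1) * (⨆ t ∈ cube d R, ‖g t‖)
          + ‖∫ t in cube d R,
              Complex.exp (2 * Real.pi * Complex.I * ((∑ i, lam i * t i : ℝ) : ℂ))
                * fderiv ℝ g t (EuclideanSpace.single ℓ 1)‖) := by
  obtain ⟨n, rfl⟩ : ∃ n, d = n + 1 := ⟨d - 1, by omega⟩
  have hπ : (0:ℝ) < 2 * Real.pi * |lam ℓ| := by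
    have h1 := Real.pi_pos; have h2 := abs_pos.mpr hℓ; positivity
  set c : ℂ := 2 * Real.pi * Complex.I with hcdef
  set toEuc : (Fin (n+1) → ℝ) → EuclideanSpace ℝ (Fin (n+1)) :=
    fun x => (WithLp.equiv 2 (Fin (n+1) → ℝ)).symm x with htoEuc
  set A : (Fin (n+1) → ℝ) →L[ℝ] ℝ :=
    ∑ i, lam i • (ContinuousLinearMap.proj i) with hAdef
  have hA_apply : ∀ x, A x = ∑ i, lam i * x i := by
    intro x
    simp [hAdef, ContinuousLinearMap.sum_apply, smul_eq_mul]
  have hA_single : A (Pi.single ℓ 1) = lam ℓ := by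
    rw [hA_apply]
    simp [Pi.single_apply, mul_ite, Finset.sum_ite_eq']
  set F : (Fin (n+1) → ℝ) → ℂ :=
    fun x => Complex.exp (c * ((∑ i, lam i * x i : ℝ) : ℂ)) * g (toEuc x) with hFdef
  set Fd : (Fin (n+1) → ℝ) → ℂ :=
    fun x => Complex.exp (c * ((∑ i, lam i * x i : ℝ) : ℂ)) *
      fderiv ℝ g (toEuc x) (EuclideanSpace.single ℓ 1) with hFddef
  set a : Fin (n+1) → ℝ := fun _ => -R with hadef
  set b : Fin (n+1) → ℝ := fun _ => R with hbdef
  have hab : a ≤ b := fun i => by simp [hadef, hbdef]; linarith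
  have hpre : (MeasurableEquiv.toLp 2 (Fin (n+1) → ℝ)) ⁻¹' (cube (n+1) R)
      = Set.Icc a b := by
    ext x
    simp [cube, Set.mem_Icc, Pi.le_def, abs_le, forall_and, hadef, hbdef,
      MeasurableEquiv.coe_toLp]
  have htrans : ∀ φ : EuclideanSpace ℝ (Fin (n+1)) → ℂ,
      ∫ t in cube (n+1) R, φ t = ∫ x in Set.Icc a b, φ (toEuc x) := by
    intro φ
    rw [← hpre]
    exact ((MeasurePreserving.symm _
      (EuclideanSpace.volume_preserving_symm_measurableEquiv_toLp (Fin (n+1)))).setIntegral_preimage_emb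
      (MeasurableEquiv.measurableEmbedding _) φ (cube (n+1) R)).symm
  -- compactness and sup bound
  have hcube_eq : cube (n+1) R = toEuc '' Set.Icc a b := by
    rw [← hpre]
    exact (Set.image_preimage_eq _ (MeasurableEquiv.toLp 2 (Fin (n+1) → ℝ)).surjective).symm
  have hcpt : IsCompact (cube (n+1) R) := by
    rw [hcube_eq]
    exact isCompact_Icc.image
      (PiLp.continuousLinearEquiv 2 ℝ (fun _ : Fin (n+1) => ℝ)).symm.continuous
  set S := ⨆ t ∈ cube (n+1) R, ‖g t‖ with hSdef
  have hgS : ∀ t ∈ cube (n+1) R, ‖g t‖ ≤ S := by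
    obtain ⟨C, hC⟩ := hcpt.exists_bound_of_continuousOn hg.continuous.continuousOn
    have hbdd : BddAbove (Set.range fun t => ⨆ _ : t ∈ cube (n+1) R, ‖g t‖) := by
      refine ⟨max C 0, ?_⟩
      rintro y ⟨u, rfl⟩
      show (⨆ _ : u ∈ cube (n+1) R, ‖g u‖) ≤ max C 0
      by_cases hu : u ∈ cube (n+1) R
      · rw [ciSup_pos hu]; exact le_max_of_le_left (hC u hu)
      · haveI : IsEmpty (u ∈ cube (n+1) R) := isEmpty_Prop.mpr hu
        rw [Real.iSup_of_isEmpty]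
        exact le_max_right _ _
    intro t ht
    calc ‖g t‖ = ⨆ _ : t ∈ cube (n+1) R, ‖g t‖ :=
      (ciSup_pos (p := t ∈ cube (n+1) R) (f := fun _ => ‖g t‖) ht).symm
    _ ≤ S := le_ciSup hbdd t
  have hS0 : 0 ≤ S := by
    have h0 : (0 : EuclideanSpace ℝ (Fin (n+1))) ∈ cube (n+1) R := by
      intro i
      simp [hR.le]
    exact (norm_nonneg _).trans (hgS 0 h0)
  -- derivative of F
  set toL : (Fin (n+1) → ℝ) →L[ℝ] EuclideanSpace ℝ (Fin (n+1)) :=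
    ((PiLp.continuousLinearEquiv 2 ℝ (fun _ : Fin (n+1) => ℝ)).symm :
      (Fin (n+1) → ℝ) →L[ℝ] EuclideanSpace ℝ (Fin (n+1))) with htoL
  have hGd : ∀ x, HasFDerivAt (fun y => g (toEuc y)) ((fderiv ℝ g (toEuc x)).comp toL) x := by
    intro x
    exact ((hg.differentiable one_ne_zero) (toEuc x)).hasFDerivAt.comp x
      (PiLp.continuousLinearEquiv 2 ℝ (fun _ : Fin (n+1) => ℝ)).symm.hasFDerivAt
  set m' : (Fin (n+1) → ℝ) →L[ℝ] ℂ := Complex.ofRealCLM.comp A with hm'def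
  set D : (Fin (n+1) → ℝ) → ((Fin (n+1) → ℝ) →L[ℝ] ℂ) := fun x =>
    Complex.exp (c * A x) • ((fderiv ℝ g (toEuc x)).comp toL)
      + g (toEuc x) • (Complex.exp (c * A x) • (c • m')) with hDdef
  have hFd' : ∀ x, HasFDerivAt F (D x) x := by
    intro x
    have h0 : HasFDerivAt (fun y : Fin (n+1) → ℝ => ((A y : ℝ) : ℂ)) m' x :=
      Complex.ofRealCLM.hasFDerivAt.comp x A.hasFDerivAt
    have h1 : HasFDerivAt (fun y : Fin (n+1) → ℝ => c * ((A y : ℝ) : ℂ)) (c • m') x :=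
      h0.const_mul c
    have hE : HasFDerivAt (fun y : Fin (n+1) → ℝ => Complex.exp (c * ((A y : ℝ) : ℂ)))
        (Complex.exp (c * ((A x : ℝ) : ℂ)) • (c • m')) x := h1.cexp
    have hmul := hE.mul (hGd x)
    have hFeq : F = fun y => Complex.exp (c * ((A y : ℝ) : ℂ)) * g (toEuc y) := by
      funext y
      rw [hFdef, hA_apply]
    rw [hFeq]
    exact hmul
  have hD_apply : ∀ x, D x (Pi.single ℓ 1) = c * lam ℓ * F x + Fd x := by
    intro x
    have htoLs : toL (Pi.single ℓ 1) = EuclideanSpace.single ℓ 1 := rfl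
    have hm's : m' (Pi.single ℓ 1) = ((lam ℓ : ℝ) : ℂ) := by
      simp [hm'def, hA_single]
    simp only [hDdef, ContinuousLinearMap.add_apply, ContinuousLinearMap.smul_apply,
      ContinuousLinearMap.coe_comp', Function.comp_apply, smul_eq_mul, htoLs, hm's,
      hFdef, hFddef, hA_apply]
    ring
  -- continuity facts
  have hEcont : Continuous fun x : Fin (n+1) → ℝ =>
      Complex.exp (c * ((∑ i, lam i * x i : ℝ) : ℂ)) := by
    apply Complex.continuous_exp.comp
    apply continuous_const.mul
    apply Complex.continuous_ofReal.comp
    exact continuous_finset_sum _ fun i _ => continuous_const.mul (continuous_apply i)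
  have hgc : Continuous fun x => g (toEuc x) :=
    hg.continuous.comp (PiLp.continuousLinearEquiv 2 ℝ (fun _ : Fin (n+1) => ℝ)).symm.continuous
  have hFc : Continuous F := hEcont.mul hgc
  have hfdc : Continuous fun x => fderiv ℝ g (toEuc x) (EuclideanSpace.single ℓ 1) := by
    have h1 : Continuous (fderiv ℝ g) := hg.continuous_fderiv one_ne_zero
    exact (ContinuousLinearMap.apply ℝ ℂ (EuclideanSpace.single ℓ 1)).continuous.comp
      (h1.comp (PiLp.continuousLinearEquiv 2 ℝ (fun _ : Fin (n+1) => ℝ)).symm.continuous)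
  have hFdc : Continuous Fd := hEcont.mul hfdc
  -- divergence theorem
  set f : Fin (n+1) → (Fin (n+1) → ℝ) → ℂ := fun i x => if i = ℓ then F x else 0 with hfdef
  set f' : Fin (n+1) → (Fin (n+1) → ℝ) → ((Fin (n+1) → ℝ) →L[ℝ] ℂ) :=
    fun i x => if i = ℓ then D x else 0 with hf'def
  have hsum : ∀ x, ∑ i, f' i x (Pi.single i 1) = D x (Pi.single ℓ 1) := by
    intro x
    rw [Finset.sum_eq_single ℓ]
    · simp [hf'def]
    · intro i _ h
      simp [hf'def, h]
    · intro h
      exact absurd (Finset.mem_univ ℓ) h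
  have hsum' : (fun x => ∑ i, f' i x (Pi.single i 1)) = fun x => c * lam ℓ * F x + Fd x := by
    funext x
    rw [hsum x, hD_apply x]
  have Hi : IntegrableOn (fun x => ∑ i, f' i x (Pi.single i 1)) (Set.Icc a b) := by
    rw [hsum']
    exact ((continuous_const.mul hFc).add hFdc).integrableOn_Icc
  have hdiv := integral_divergence_of_hasFDerivAt_off_countable' a b hab f f' ∅
    Set.countable_empty
    (fun i => by
      by_cases h : i = ℓ
      · subst h; simpa [hfdef] using hFc.continuousOn
      · simp [hfdef, h]; exact continuousOn_const)
    (fun x hx i => by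
      by_cases h : i = ℓ
      · subst h; simpa [hfdef, hf'def] using hFd' x
      · simp only [hfdef, hf'def, if_neg h]; exact hasFDerivAt_const 0 x)
    Hi
  have hRHS : ∑ i : Fin (n+1),
      ((∫ x in Set.Icc (a ∘ i.succAbove) (b ∘ i.succAbove), f i (i.insertNth (b i) x))
        - ∫ x in Set.Icc (a ∘ i.succAbove) (b ∘ i.succAbove), f i (i.insertNth (a i) x))
      = (∫ x in Set.Icc (a ∘ ℓ.succAbove) (b ∘ ℓ.succAbove), F (ℓ.insertNth R x))
        - ∫ x in Set.Icc (a ∘ ℓ.succAbove) (b ∘ ℓ.succAbove), F (ℓ.insertNth (-R) x) := by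
    rw [Finset.sum_eq_single ℓ]
    · simp [hfdef, hadef, hbdef]
    · intro i _ h
      simp [hfdef, h]
    · intro h
      exact absurd (Finset.mem_univ ℓ) h
  rw [hsum'] at hdiv
  rw [integral_add (f := fun x => c * ((lam ℓ : ℝ) : ℂ) * F x) ((continuous_const.mul hFc).integrableOn_Icc) hFdc.integrableOn_Icc,
    integral_const_mul, hRHS] at hdiv
  have hkey : c * lam ℓ * ∫ x in Set.Icc a b, F x
      = ((∫ x in Set.Icc (a ∘ ℓ.succAbove) (b ∘ ℓ.succAbove), F (ℓ.insertNth R x))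
        - ∫ x in Set.Icc (a ∘ ℓ.succAbove) (b ∘ ℓ.succAbove), F (ℓ.insertNth (-R) x))
        - ∫ x in Set.Icc a b, Fd x := by
    rw [← hdiv]; ring
  -- norm of exponential
  have hnorm_exp : ∀ r : ℝ, ‖Complex.exp (c * (r : ℂ))‖ = 1 := by
    intro r
    have : c * (r : ℂ) = ((2 * Real.pi * r : ℝ) : ℂ) * Complex.I := by
      rw [hcdef]; push_cast; ring
    rw [this, Complex.norm_exp_ofReal_mul_I]
  -- face bounds
  have hvol : (volume (Set.Icc (a ∘ ℓ.succAbove) (b ∘ ℓ.succAbove))).toReal = (2*R)^n := by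
    rw [Real.volume_Icc_pi_toReal (fun i => by simp [hadef, hbdef]; linarith)]
    simp [hadef, hbdef, Finset.prod_const]
    ring_nf
  have hface : ∀ v : ℝ, |v| ≤ R →
      ‖∫ x in Set.Icc (a ∘ ℓ.succAbove) (b ∘ ℓ.succAbove), F (ℓ.insertNth v x)‖
        ≤ (2*R)^n * S := by
    intro v hv
    have hb : ∀ x ∈ Set.Icc (a ∘ ℓ.succAbove) (b ∘ ℓ.succAbove),
        ‖F (ℓ.insertNth v x)‖ ≤ S := by
      intro x hx
      have hmem : toEuc (ℓ.insertNth v x) ∈ cube (n+1) R := by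
        intro i
        by_cases h : i = ℓ
        · subst h
          simpa [htoEuc, Fin.insertNth_apply_same] using hv
        · obtain ⟨j, rfl⟩ := Fin.exists_succAbove_eq h
          have h1 := hx.1 j
          have h2 := hx.2 j
          simp only [Function.comp_apply, hadef, hbdef] at h1 h2
          simpa [htoEuc, Fin.insertNth_apply_succAbove, abs_le] using ⟨h1, h2⟩
      calc ‖F (ℓ.insertNth v x)‖
          = ‖g (toEuc (ℓ.insertNth v x))‖ := by
            rw [hFdef]
            rw [norm_mul, hnorm_exp, one_mul]
      _ ≤ S := hgS _ hmem
    calc ‖∫ x in Set.Icc (a ∘ ℓ.succAbove) (b ∘ ℓ.succAbove), F (ℓ.insertNth v x)‖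
        ≤ S * (volume (Set.Icc (a ∘ ℓ.succAbove) (b ∘ ℓ.succAbove))).toReal :=
          norm_setIntegral_le_of_norm_le_const (measure_Icc_lt_top) hb
    _ = (2*R)^n * S := by rw [hvol]; ring
  -- assemble
  have hcnorm : ‖c * ((lam ℓ : ℝ) : ℂ)‖ = 2 * Real.pi * |lam ℓ| := by
    simp [hcdef, norm_mul, Complex.norm_real, Complex.norm_I, Real.norm_eq_abs,
      abs_of_nonneg Real.pi_pos.le]
  have h1 : (∫ t in cube (n+1) R,
      Complex.exp (2 * Real.pi * Complex.I * ((∑ i, lam i * t i : ℝ) : ℂ)) * g t)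
      = ∫ x in Set.Icc a b, F x := htrans _
  have h2 : (∫ t in cube (n+1) R,
      Complex.exp (2 * Real.pi * Complex.I * ((∑ i, lam i * t i : ℝ) : ℂ))
        * fderiv ℝ g t (EuclideanSpace.single ℓ 1))
      = ∫ x in Set.Icc a b, Fd x := htrans _
  rw [h1, h2, Nat.add_sub_cancel]
  rw [one_div, inv_mul_eq_div, le_div_iff₀ hπ]
  have hnormeq : ‖∫ x in Set.Icc a b, F x‖ * (2 * Real.pi * |lam ℓ|)
      = ‖((∫ x in Set.Icc (a ∘ ℓ.succAbove) (b ∘ ℓ.succAbove), F (ℓ.insertNth R x))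
        - ∫ x in Set.Icc (a ∘ ℓ.succAbove) (b ∘ ℓ.succAbove), F (ℓ.insertNth (-R) x))
        - ∫ x in Set.Icc a b, Fd x‖ := by
    rw [← hkey, norm_mul, hcnorm]
    ring
  rw [hnormeq]
  calc ‖((∫ x in Set.Icc (a ∘ ℓ.succAbove) (b ∘ ℓ.succAbove), F (ℓ.insertNth R x))
        - ∫ x in Set.Icc (a ∘ ℓ.succAbove) (b ∘ ℓ.succAbove), F (ℓ.insertNth (-R) x))
        - ∫ x in Set.Icc a b, Fd x‖
      ≤ (‖∫ x in Set.Icc (a ∘ ℓ.succAbove) (b ∘ ℓ.succAbove), F (ℓ.insertNth R x)‖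
          + ‖∫ x in Set.Icc (a ∘ ℓ.succAbove) (b ∘ ℓ.succAbove), F (ℓ.insertNth (-R) x)‖)
          + ‖∫ x in Set.Icc a b, Fd x‖ := by
        refine (norm_sub_le _ _).trans ?_
        gcongr
        exact norm_sub_le _ _
  _ ≤ ((2*R)^n * S + (2*R)^n * S) + ‖∫ x in Set.Icc a b, Fd x‖ := by
        gcongr
        · exact hface R (by rw [abs_of_pos hR])
        · exact hface (-R) (by rw [abs_neg, abs_of_pos hR])
  _ = 2 * (2*R)^n * S + ‖∫ x in Set.Icc a b, Fd x‖ := by ring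
end
end

section
/- Let d ≥ 1, k ≥ 1, let g : ℝ^d → ℂ be k times continuously differentiable, let λ ∈ ℝ^d, and let ℓ ∈ {1, …, d} be an index with λ_ℓ ≠ 0. Set M_j = sup_{t ∈ C_R(0)} |(∂^j g/∂t_ℓ^j)(t)| for 0 ≤ j ≤ k. Then for every R > 0, |∫_{C_R(0)} e^{2πi⟨λ,t⟩} g(t) dt| ≤ (2π|λ_ℓ|)^{−k} |∫_{C_R(0)} e^{2πi⟨λ,t⟩} (∂^k g/∂t_ℓ^k)(t) dt| + (2R)^{d−1} ∑_{j=1}^k M_{j−1} / (π|λ_ℓ|)^j. -/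
open MeasureTheory

noncomputable section

/-- Partial derivative in the `ℓ`-th coordinate direction. -/
def pderivDir {d : ℕ} (ℓ : Fin d) (g : EuclideanSpace ℝ (Fin d) → ℂ) :
    EuclideanSpace ℝ (Fin d) → ℂ :=
  fun t => fderiv ℝ g t (EuclideanSpace.single ℓ 1)

open Set

def ins {n : ℕ} (ℓ : Fin (n+1)) (s : ℝ) (y : Fin n → ℝ) : EuclideanSpace ℝ (Fin (n+1)) :=
  (WithLp.equiv 2 _).symm (ℓ.insertNth s y)

lemma cube_preimage {n : ℕ} (ℓ : Fin (n+1)) (R : ℝ) :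
    ((fun p : ℝ × (Fin n → ℝ) => ins ℓ p.1 p.2) ⁻¹' cube (n+1) R)
      = Icc (-R) R ×ˢ univ.pi (fun _ : Fin n => Icc (-R) R) := by
  ext ⟨s, y⟩
  simp only [mem_preimage, cube, ins, mem_setOf_eq, mem_prod, mem_Icc, mem_pi, mem_univ,
    forall_true_left]
  constructor
  · intro h
    constructor
    · have := h ℓ
      simp only [WithLp.equiv_symm_apply, PiLp.toLp_apply, Fin.insertNth_apply_same] at this
      rwa [abs_le] at this
    · intro i
      have := h (ℓ.succAbove i)
      simp only [WithLp.equiv_symm_apply, PiLp.toLp_apply, Fin.insertNth_apply_succAbove] at this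
      rwa [abs_le] at this
  · rintro ⟨h1, h2⟩
    rw [ℓ.forall_iff_succAbove]
    constructor
    · simpa [WithLp.equiv_symm_apply, PiLp.toLp_apply, abs_le] using h1
    · intro j
      simpa [WithLp.equiv_symm_apply, PiLp.toLp_apply, abs_le] using h2 j

lemma cube_eq (d : ℕ) (R : ℝ) :
    cube d R = (PiLp.continuousLinearEquiv 2 ℝ (fun _ : Fin d => ℝ)) ⁻¹'
      (univ.pi fun _ : Fin d => Icc (-R) R) := by
  ext t
  simp only [cube, mem_setOf_eq, mem_preimage, mem_pi, mem_univ, true_implies, mem_Icc, abs_le]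
  exact Iff.rfl

lemma cube_isCompact (d : ℕ) (R : ℝ) : IsCompact (cube d R) := by
  rw [cube_eq]
  exact (Homeomorph.isCompact_preimage
    (PiLp.continuousLinearEquiv 2 ℝ (fun _ : Fin d => ℝ)).toHomeomorph).mpr
    (isCompact_univ_pi fun _ => isCompact_Icc)


lemma transfer {n : ℕ} (ℓ : Fin (n+1)) (F : EuclideanSpace ℝ (Fin (n+1)) → ℂ)
    (hF : Continuous F) (R : ℝ) :
    ∫ t in cube (n+1) R, F t
      = ∫ y in univ.pi (fun _ : Fin n => Icc (-R) R), ∫ s in Icc (-R) R, F (ins ℓ s y) := by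
  set ψ : (ℝ × (Fin n → ℝ)) ≃ᵐ EuclideanSpace ℝ (Fin (n+1)) :=
    (MeasurableEquiv.piFinSuccAbove (fun _ : Fin (n+1) => ℝ) ℓ).symm.trans
      (MeasurableEquiv.toLp 2 (Fin (n+1) → ℝ)).symm.symm with hψdef
  have hψ : ∀ p : ℝ × (Fin n → ℝ), ψ p = ins ℓ p.1 p.2 := by
    rintro ⟨s, y⟩
    rfl
  have hmp : MeasurePreserving ψ volume volume :=
    ((EuclideanSpace.volume_preserving_symm_measurableEquiv_toLp (Fin (n+1))).symm).comp
      ((volume_preserving_piFinSuccAbove (fun _ : Fin (n+1) => ℝ) ℓ).symm)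
  have hpre : ψ ⁻¹' cube (n+1) R = Icc (-R) R ×ˢ univ.pi (fun _ : Fin n => Icc (-R) R) := by
    rw [show (⇑ψ) = (fun p : ℝ × (Fin n → ℝ) => ins ℓ p.1 p.2) from funext hψ]
    exact cube_preimage ℓ R
  have hint : IntegrableOn (F ∘ ψ) (Icc (-R) R ×ˢ univ.pi (fun _ : Fin n => Icc (-R) R)) := by
    rw [← hpre]
    exact (hmp.integrableOn_comp_preimage ψ.measurableEmbedding).2
      ((hF.continuousOn).integrableOn_compact (cube_isCompact (n+1) R))
  rw [← hmp.map_eq, setIntegral_map_equiv, hpre]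
  have hint2 : Integrable (F ∘ ψ)
      ((volume.restrict (Icc (-R) R)).prod (volume.restrict (univ.pi fun _ : Fin n => Icc (-R) R))) := by
    rw [Measure.prod_restrict, ← Measure.volume_eq_prod]
    exact hint
  have hswap : ∫ p in Icc (-R) R ×ˢ univ.pi (fun _ : Fin n => Icc (-R) R), F (ψ p)
      = ∫ y in univ.pi (fun _ : Fin n => Icc (-R) R), ∫ s in Icc (-R) R, F (ψ (s, y)) := by
    calc ∫ p in Icc (-R) R ×ˢ univ.pi (fun _ : Fin n => Icc (-R) R), F (ψ p)
        = ∫ p, F (ψ p) ∂((volume.restrict (Icc (-R) R)).prod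
            (volume.restrict (univ.pi fun _ : Fin n => Icc (-R) R))) := by
          rw [Measure.prod_restrict, ← Measure.volume_eq_prod]
      _ = ∫ s in Icc (-R) R, ∫ y in univ.pi (fun _ : Fin n => Icc (-R) R), F (ψ (s, y)) :=
          integral_prod _ hint2
      _ = ∫ y in univ.pi (fun _ : Fin n => Icc (-R) R), ∫ s in Icc (-R) R, F (ψ (s, y)) :=
          integral_integral_swap (by exact hint2)
  rw [hswap]
  simp_rw [hψ]


lemma one_dim_ibp {a c : ℂ} (ha : a ≠ 0) {h h' : ℝ → ℂ}
    (hh : ∀ s, HasDerivAt h (h' s) s) (hh' : Continuous h') {R : ℝ} (hR : 0 ≤ R) :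
    ∫ s in Icc (-R) R, Complex.exp (a * s + c) * h s
      = (Complex.exp (a * R + c) * h R - Complex.exp (a * (-R) + c) * h (-R)) / a
        - (∫ s in Icc (-R) R, Complex.exp (a * s + c) * h' s) / a := by
  have hRR : (-R : ℝ) ≤ R := neg_le_self hR
  set e : ℝ → ℂ := fun s => Complex.exp (a * s + c) with he
  have hecont : Continuous e := by
    fun_prop
  have hVd : ∀ s : ℝ, HasDerivAt (fun s : ℝ => e s / a) (e s) s := by
    intro s
    have h1 : HasDerivAt (fun s : ℝ => a * s + c) a s := by
      simpa using ((Complex.ofRealCLM.hasDerivAt (x := s)).const_mul a).add_const c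
    have h2 : HasDerivAt e (Complex.exp (a * s + c) * a) s := h1.cexp
    simpa [mul_div_assoc, mul_div_cancel_right₀, ha] using h2.div_const a
  have hhc : Continuous h := by
    have : Differentiable ℝ h := fun s => (hh s).differentiableAt
    exact this.continuous
  have key := intervalIntegral.integral_mul_deriv_eq_deriv_mul
    (a := -R) (b := R) (u := h) (v := fun s => e s / a) (u' := h') (v' := e)
    (fun x _ => hh x) (fun x _ => hVd x)
    (hh'.intervalIntegrable _ _) (hecont.intervalIntegrable _ _)
  have cv : ∀ f : ℝ → ℂ, ∫ s in Icc (-R) R, f s = ∫ s in (-R)..R, f s := by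
    intro f
    rw [intervalIntegral.integral_of_le hRR, integral_Icc_eq_integral_Ioc]
  rw [cv, cv]
  calc ∫ s in (-R)..R, e s * h s = ∫ s in (-R)..R, h s * e s := by simp_rw [mul_comm]
    _ = h R * (e R / a) - h (-R) * (e (-R) / a) - ∫ s in (-R)..R, h' s * (e s / a) := key
    _ = (e R * h R - e (-R) * h (-R)) / a - (∫ s in (-R)..R, e s * h' s) / a := by
        rw [← intervalIntegral.integral_div]
        have hc : ∀ s, h' s * (e s / a) = e s * h' s / a := fun s => by ring
        simp_rw [hc]
        congr 1
        ring
    _ = (Complex.exp (a * R + c) * h R - Complex.exp (a * (-R) + c) * h (-R)) / a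
        - (∫ s in (-R)..R, Complex.exp (a * s + c) * h' s) / a := by
        simp only [he]
        push_cast
        ring_nf

lemma ins_apply_same {n : ℕ} (ℓ : Fin (n+1)) (s : ℝ) (y : Fin n → ℝ) :
    ins ℓ s y ℓ = s := by
  simp only [ins, WithLp.equiv_symm_apply, PiLp.toLp_apply, Fin.insertNth_apply_same]

lemma ins_apply_succAbove {n : ℕ} (ℓ : Fin (n+1)) (s : ℝ) (y : Fin n → ℝ) (j : Fin n) :
    ins ℓ s y (ℓ.succAbove j) = y j := by
  simp only [ins, WithLp.equiv_symm_apply, PiLp.toLp_apply, Fin.insertNth_apply_succAbove]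

lemma ins_line {n : ℕ} (ℓ : Fin (n+1)) (s : ℝ) (y : Fin n → ℝ) :
    ins ℓ s y = ins ℓ 0 y + s • EuclideanSpace.single ℓ 1 := by
  ext j
  have h : ∀ j, (ins ℓ 0 y + s • EuclideanSpace.single ℓ 1 : EuclideanSpace ℝ (Fin (n+1))) j
      = ins ℓ 0 y j + s * EuclideanSpace.single ℓ (1:ℝ) j := fun _ => rfl
  refine Fin.succAboveCases ℓ ?_ (fun j' => ?_) j
  · rw [h, ins_apply_same, ins_apply_same, EuclideanSpace.single_apply, if_pos rfl]
    ring
  · rw [h, ins_apply_succAbove, ins_apply_succAbove, EuclideanSpace.single_apply,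
      if_neg (Fin.succAbove_ne ℓ j'), mul_zero, add_zero]

lemma hasDerivAt_ins {n : ℕ} (ℓ : Fin (n+1)) (g : EuclideanSpace ℝ (Fin (n+1)) → ℂ)
    (hg : Differentiable ℝ g) (y : Fin n → ℝ) (s : ℝ) :
    HasDerivAt (fun s => g (ins ℓ s y)) (pderivDir ℓ g (ins ℓ s y)) s := by
  have hX : HasDerivAt (fun s : ℝ => ins ℓ s y) (EuclideanSpace.single ℓ 1) s := by
    have hfun : (fun s : ℝ => ins ℓ s y)
        = fun s : ℝ => ins ℓ 0 y + s • EuclideanSpace.single ℓ 1 :=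
      funext fun s => ins_line ℓ s y
    rw [hfun]
    have h1 := ((hasDerivAt_id s).smul_const (EuclideanSpace.single ℓ (1:ℝ))).const_add
      (ins ℓ 0 y)
    simp only [one_smul] at h1
    exact h1
  exact (hg (ins ℓ s y)).hasFDerivAt.comp_hasDerivAt s hX

lemma sum_ins {n : ℕ} (ℓ : Fin (n+1)) (lam : EuclideanSpace ℝ (Fin (n+1)))
    (s : ℝ) (y : Fin n → ℝ) :
    ∑ i, lam i * ins ℓ s y i = (∑ i, lam i * ins ℓ 0 y i) + lam ℓ * s := by
  rw [Fin.sum_univ_succAbove (fun i => lam i * ins ℓ s y i) ℓ,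
    Fin.sum_univ_succAbove (fun i => lam i * ins ℓ 0 y i) ℓ]
  simp only [ins_apply_same, ins_apply_succAbove]
  ring

def ew {d : ℕ} (lam t : EuclideanSpace ℝ (Fin d)) : ℂ :=
  Complex.exp (2 * Real.pi * Complex.I * ((∑ i, lam i * t i : ℝ) : ℂ))

lemma ew_continuous {d : ℕ} (lam : EuclideanSpace ℝ (Fin d)) : Continuous (ew lam) := by
  unfold ew
  have h : Continuous fun t : EuclideanSpace ℝ (Fin d) => (∑ i, lam i * t i : ℝ) := by
    refine continuous_finset_sum _ fun i _ => ?_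
    exact continuous_const.mul ((continuous_apply i).comp
      (PiLp.continuousLinearEquiv 2 ℝ (fun _ : Fin d => ℝ)).continuous)
  fun_prop

lemma ew_norm {d : ℕ} (lam t : EuclideanSpace ℝ (Fin d)) : ‖ew lam t‖ = 1 := by
  unfold ew
  rw [Complex.norm_exp]
  simp [mul_comm, mul_assoc]

lemma ins_mem_cube {n : ℕ} {ℓ : Fin (n+1)} {R s : ℝ} (hs : |s| ≤ R) {y : Fin n → ℝ}
    (hy : y ∈ univ.pi (fun _ : Fin n => Icc (-R) R)) : ins ℓ s y ∈ cube (n+1) R := by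
  intro j
  refine Fin.succAboveCases ℓ ?_ (fun j' => ?_) j
  · rwa [ins_apply_same]
  · rw [ins_apply_succAbove]
    rw [abs_le]
    exact hy j' (mem_univ _)

lemma continuous_ins {n : ℕ} (ℓ : Fin (n+1)) (r : ℝ) :
    Continuous fun y : Fin n → ℝ => ins ℓ r y := by
  have h1 : Continuous fun y : Fin n → ℝ => ℓ.insertNth (α := fun _ => ℝ) r y :=
    Continuous.finInsertNth ℓ continuous_const continuous_id
  exact (PiLp.continuousLinearEquiv 2 ℝ (fun _ : Fin (n+1) => ℝ)).symm.continuous.comp h1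

lemma integrable_inner {n : ℕ} (ℓ : Fin (n+1)) (F : EuclideanSpace ℝ (Fin (n+1)) → ℂ)
    (hF : Continuous F) (R : ℝ) :
    IntegrableOn (fun y => ∫ s in Icc (-R) R, F (ins ℓ s y))
      (univ.pi fun _ : Fin n => Icc (-R) R) := by
  set ψ : (ℝ × (Fin n → ℝ)) ≃ᵐ EuclideanSpace ℝ (Fin (n+1)) :=
    (MeasurableEquiv.piFinSuccAbove (fun _ : Fin (n+1) => ℝ) ℓ).symm.trans
      (MeasurableEquiv.toLp 2 (Fin (n+1) → ℝ)).symm.symm with hψdef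
  have hψ : ∀ p : ℝ × (Fin n → ℝ), ψ p = ins ℓ p.1 p.2 := by
    rintro ⟨s, y⟩; rfl
  have hmp : MeasurePreserving ψ volume volume :=
    ((EuclideanSpace.volume_preserving_symm_measurableEquiv_toLp (Fin (n+1))).symm).comp
      ((volume_preserving_piFinSuccAbove (fun _ : Fin (n+1) => ℝ) ℓ).symm)
  have hpre : ψ ⁻¹' cube (n+1) R = Icc (-R) R ×ˢ univ.pi (fun _ : Fin n => Icc (-R) R) := by
    rw [show (⇑ψ) = (fun p : ℝ × (Fin n → ℝ) => ins ℓ p.1 p.2) from funext hψ]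
    exact cube_preimage ℓ R
  have hint : IntegrableOn (F ∘ ψ) (Icc (-R) R ×ˢ univ.pi (fun _ : Fin n => Icc (-R) R)) := by
    rw [← hpre]
    exact (hmp.integrableOn_comp_preimage ψ.measurableEmbedding).2
      ((hF.continuousOn).integrableOn_compact (cube_isCompact (n+1) R))
  have hint2 : Integrable (F ∘ ψ)
      ((volume.restrict (Icc (-R) R)).prod
        (volume.restrict (univ.pi fun _ : Fin n => Icc (-R) R))) := by
    rw [Measure.prod_restrict, ← Measure.volume_eq_prod]
    exact hint
  have := hint2.integral_prod_right
  simp only [Function.comp_apply, hψ] at this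
  exact this

lemma stepA {n : ℕ} (g : EuclideanSpace ℝ (Fin (n+1)) → ℂ) (hg : ContDiff ℝ 1 g)
    (lam : EuclideanSpace ℝ (Fin (n+1))) (ℓ : Fin (n+1)) (hℓ : lam ℓ ≠ 0)
    (R : ℝ) (hR : 0 < R) (M : ℝ) (hM : ∀ t ∈ cube (n+1) R, ‖g t‖ ≤ M) :
    ‖∫ t in cube (n+1) R, ew lam t * g t‖
      ≤ ‖∫ t in cube (n+1) R, ew lam t * pderivDir ℓ g t‖ / (2 * Real.pi * |lam ℓ|)
        + (2 * R) ^ n * (M / (Real.pi * |lam ℓ|)) := by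
  have hπ : (0:ℝ) < Real.pi := Real.pi_pos
  have habs : (0:ℝ) < |lam ℓ| := abs_pos.mpr hℓ
  set a : ℂ := 2 * Real.pi * Complex.I * (lam ℓ : ℂ) with ha_def
  have ha : a ≠ 0 := by
    simp only [ha_def]
    intro h
    apply hℓ
    simpa [Complex.ext_iff, Real.pi_ne_zero, Complex.I_ne_zero] using h
  have hanorm : ‖a‖ = 2 * Real.pi * |lam ℓ| := by
    simp only [ha_def]
    rw [norm_mul, norm_mul, norm_mul]
    simp [Complex.norm_real, Real.pi_nonneg, abs_of_nonneg]
  have hgd : Differentiable ℝ g := hg.differentiable one_ne_zero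
  have hpd_cont : Continuous (pderivDir ℓ g) := by
    have h1 : Continuous (fderiv ℝ g) := hg.continuous_fderiv one_ne_zero
    exact h1.clm_apply continuous_const
  set F : EuclideanSpace ℝ (Fin (n+1)) → ℂ := fun t => ew lam t * g t with hF_def
  set F2 : EuclideanSpace ℝ (Fin (n+1)) → ℂ := fun t => ew lam t * pderivDir ℓ g t with hF2_def
  have hF : Continuous F := (ew_continuous lam).mul hgd.continuous
  have hF2 : Continuous F2 := (ew_continuous lam).mul hpd_cont
  set pc : Set (Fin n → ℝ) := univ.pi (fun _ : Fin n => Icc (-R) R) with hpc_def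
  set A : (Fin n → ℝ) → ℂ := fun y => ∫ s in Icc (-R) R, F2 (ins ℓ s y) with hA_def
  set B : (Fin n → ℝ) → ℂ := fun y => (F (ins ℓ R y) - F (ins ℓ (-R) y)) / a with hB_def
  -- per-y identity
  have hy : ∀ y : Fin n → ℝ,
      (∫ s in Icc (-R) R, F (ins ℓ s y)) = B y - A y / a := by
    intro y
    set c : ℂ := 2 * Real.pi * Complex.I * ((∑ i, lam i * ins ℓ 0 y i : ℝ) : ℂ) with hc_def
    have hexp : ∀ s : ℝ, ew lam (ins ℓ s y) = Complex.exp (a * s + c) := by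
      intro s
      unfold ew
      rw [sum_ins ℓ lam s y]
      congr 1
      rw [ha_def, hc_def]
      push_cast
      ring
    have hcont_s : Continuous fun s : ℝ => pderivDir ℓ g (ins ℓ s y) := by
      have hline : Continuous fun s : ℝ => ins ℓ s y := by
        have hfun : (fun s : ℝ => ins ℓ s y)
            = fun s : ℝ => ins ℓ 0 y + s • EuclideanSpace.single ℓ 1 :=
          funext fun s => ins_line ℓ s y
        rw [hfun]
        exact continuous_const.add (continuous_id.smul continuous_const)
      exact hpd_cont.comp hline
    have key := one_dim_ibp (c := c) ha
      (h := fun s => g (ins ℓ s y)) (h' := fun s => pderivDir ℓ g (ins ℓ s y))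
      (hasDerivAt_ins ℓ g hgd y) hcont_s hR.le
    simp only [hF_def, hF2_def, hB_def, hA_def]
    simp only [hexp]
    rw [key]
    beta_reduce
    push_cast
    ring
  have hIA : IntegrableOn A pc := integrable_inner ℓ F2 hF2 R
  have hpc_compact : IsCompact pc := isCompact_univ_pi fun _ => isCompact_Icc
  have hpc_meas : MeasurableSet pc := hpc_compact.measurableSet
  have hIB : IntegrableOn B pc := by
    have hc1 : Continuous fun y : Fin n → ℝ => F (ins ℓ R y) := hF.comp (continuous_ins ℓ R)
    have hc2 : Continuous fun y : Fin n → ℝ => F (ins ℓ (-R) y) := hF.comp (continuous_ins ℓ (-R))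
    exact (((hc1.sub hc2).div_const a).continuousOn).integrableOn_compact hpc_compact
  have hmain : (∫ t in cube (n+1) R, F t) = (∫ y in pc, B y) - (∫ y in pc, A y) / a := by
    rw [transfer ℓ F hF R]
    calc ∫ y in pc, ∫ s in Icc (-R) R, F (ins ℓ s y)
        = ∫ y in pc, (B y - A y / a) := by
          refine setIntegral_congr_fun hpc_meas fun y _ => ?_
          exact hy y
      _ = (∫ y in pc, B y) - ∫ y in pc, A y / a := integral_sub hIB (hIA.div_const a)
      _ = (∫ y in pc, B y) - (∫ y in pc, A y) / a := by
          congr 1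
          rw [integral_div]
  have hA_eq : (∫ y in pc, A y) = ∫ t in cube (n+1) R, F2 t := (transfer ℓ F2 hF2 R).symm
  have hvol : volume pc = ENNReal.ofReal ((2*R)^n) := by
    rw [hpc_def, volume_pi_pi]
    simp only [Real.volume_Icc]
    rw [Finset.prod_const, ← ENNReal.ofReal_pow (by linarith)]
    congr 2
    · ring
    · simp
  have hM0 : 0 ≤ M := by
    refine le_trans (norm_nonneg (g 0)) (hM 0 fun i => ?_)
    have : (0 : EuclideanSpace ℝ (Fin (n+1))) i = 0 := rfl
    rw [this, abs_zero]
    exact hR.le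
  have hBbd : ∀ y ∈ pc, ‖B y‖ ≤ 2 * M / (2 * Real.pi * |lam ℓ|) := by
    intro y hy'
    have habsR : |R| ≤ R := by rw [abs_of_pos hR]
    have habsnR : |(-R : ℝ)| ≤ R := by rw [abs_neg, abs_of_pos hR]
    have h1 : ‖F (ins ℓ R y)‖ ≤ M := by
      rw [hF_def]
      simp only []
      rw [norm_mul, ew_norm, one_mul]
      exact hM _ (ins_mem_cube habsR hy')
    have h2 : ‖F (ins ℓ (-R) y)‖ ≤ M := by
      rw [hF_def]
      simp only []
      rw [norm_mul, ew_norm, one_mul]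
      exact hM _ (ins_mem_cube habsnR hy')
    have hnum : ‖F (ins ℓ R y) - F (ins ℓ (-R) y)‖ ≤ 2 * M := by
      refine (norm_sub_le _ _).trans ?_
      linarith
    have : ‖B y‖ = ‖F (ins ℓ R y) - F (ins ℓ (-R) y)‖ / (2 * Real.pi * |lam ℓ|) := by
      rw [hB_def]
      simp only []
      rw [norm_div, hanorm]
    rw [this]
    gcongr
  have hBint : ‖∫ y in pc, B y‖ ≤ 2 * M / (2 * Real.pi * |lam ℓ|) * (2*R)^n := by
    have h := norm_setIntegral_le_of_norm_le_const (μ := volume) (s := pc)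
      (f := B) (C := 2 * M / (2 * Real.pi * |lam ℓ|))
      (by rw [hvol]; exact ENNReal.ofReal_lt_top) hBbd
    rwa [measureReal_def, hvol, ENNReal.toReal_ofReal (by positivity)] at h
  calc ‖∫ t in cube (n+1) R, F t‖
      = ‖(∫ y in pc, B y) - (∫ t in cube (n+1) R, F2 t) / a‖ := by rw [hmain, hA_eq]
    _ ≤ ‖∫ y in pc, B y‖ + ‖(∫ t in cube (n+1) R, F2 t) / a‖ := norm_sub_le _ _
    _ = ‖∫ y in pc, B y‖ + ‖∫ t in cube (n+1) R, F2 t‖ / (2 * Real.pi * |lam ℓ|) := by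
        rw [norm_div, hanorm]
    _ ≤ 2 * M / (2 * Real.pi * |lam ℓ|) * (2*R)^n
        + ‖∫ t in cube (n+1) R, F2 t‖ / (2 * Real.pi * |lam ℓ|) := by linarith
    _ = ‖∫ t in cube (n+1) R, F2 t‖ / (2 * Real.pi * |lam ℓ|)
        + (2 * R) ^ n * (M / (Real.pi * |lam ℓ|)) := by
        have : 2 * M / (2 * Real.pi * |lam ℓ|) = M / (Real.pi * |lam ℓ|) := by
          rw [div_eq_div_iff (by positivity) (by positivity)]
          ring
        rw [this]
        ring

lemma le_sup_cube {d : ℕ} (f : EuclideanSpace ℝ (Fin d) → ℂ) (hf : Continuous f) (R : ℝ)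
    {t : EuclideanSpace ℝ (Fin d)} (ht : t ∈ cube d R) :
    ‖f t‖ ≤ ⨆ t ∈ cube d R, ‖f t‖ := by
  obtain ⟨C, hC⟩ := ((cube_isCompact d R).image_of_continuousOn hf.norm.continuousOn).bddAbove
  have hbdd : BddAbove (Set.range fun t => ⨆ _ : t ∈ cube d R, ‖f t‖) := by
    refine ⟨max C 0, ?_⟩
    rintro x ⟨u, rfl⟩
    show (⨆ _ : u ∈ cube d R, ‖f u‖) ≤ max C 0
    by_cases hu : u ∈ cube d R
    · rw [ciSup_pos (f := fun _ => ‖f u‖) hu]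
      exact le_max_of_le_left (hC ⟨u, hu, rfl⟩)
    · haveI : IsEmpty (u ∈ cube d R) := ⟨hu⟩
      rw [Real.iSup_of_isEmpty]
      exact le_max_right _ _
  calc ‖f t‖ = ⨆ _ : t ∈ cube d R, ‖f t‖ := (ciSup_pos (f := fun _ => ‖f t‖) ht).symm
    _ ≤ ⨆ t ∈ cube d R, ‖f t‖ := le_ciSup hbdd t

lemma sup_cube_nonneg {d : ℕ} (f : EuclideanSpace ℝ (Fin d) → ℂ) (R : ℝ) :
    0 ≤ ⨆ t ∈ cube d R, ‖f t‖ :=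
  Real.iSup_nonneg fun _ => Real.iSup_nonneg fun _ => norm_nonneg _

lemma pderiv_contDiff {d : ℕ} (ℓ : Fin d) {k : ℕ} {g : EuclideanSpace ℝ (Fin d) → ℂ}
    (hg : ContDiff ℝ ((k+1 : ℕ) : ℕ∞) g) : ContDiff ℝ (k : ℕ∞) (pderivDir ℓ g) := by
  have h1 : ContDiff ℝ (k : ℕ∞) (fderiv ℝ g) := by
    apply hg.fderiv_right
    push_cast
    rfl
  exact h1.clm_apply contDiff_const

lemma iterate_pderiv_continuous {d : ℕ} (ℓ : Fin d) {k : ℕ} {g : EuclideanSpace ℝ (Fin d) → ℂ}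
    (hg : ContDiff ℝ (k : ℕ∞) g) (j : ℕ) (hj : j ≤ k) :
    Continuous ((pderivDir ℓ)^[j] g) := by
  induction j generalizing g k with
  | zero => exact hg.continuous
  | succ m ih =>
    obtain ⟨k', rfl⟩ : ∃ k', k = k' + 1 := ⟨k - 1, by omega⟩
    rw [Function.iterate_succ_apply]
    exact ih (k := k') (pderiv_contDiff ℓ hg) (by omega)

lemma mainaux {n : ℕ} (k : ℕ) (g : EuclideanSpace ℝ (Fin (n+1)) → ℂ)
    (hg : ContDiff ℝ (k : ℕ∞) g)
    (lam : EuclideanSpace ℝ (Fin (n+1))) (ℓ : Fin (n+1)) (hℓ : lam ℓ ≠ 0)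
    (R : ℝ) (hR : 0 < R) :
    ‖∫ t in cube (n+1) R, ew lam t * g t‖
      ≤ ‖∫ t in cube (n+1) R, ew lam t * (pderivDir ℓ)^[k] g t‖
          / (2 * Real.pi * |lam ℓ|) ^ k
        + (2 * R) ^ n *
            ∑ j ∈ Finset.range k,
              (⨆ t ∈ cube (n+1) R, ‖(pderivDir ℓ)^[j] g t‖)
                / (Real.pi * |lam ℓ|) ^ (j + 1) := by
  have hπ : (0:ℝ) < Real.pi := Real.pi_pos
  have habs : (0:ℝ) < |lam ℓ| := abs_pos.mpr hℓ
  induction k generalizing g with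
  | zero => simp
  | succ k ih =>
    have hg1 : ContDiff ℝ 1 g := hg.of_le (by exact_mod_cast Nat.one_le_iff_ne_zero.mpr (by omega))
    have hg' : ContDiff ℝ (k : ℕ∞) (pderivDir ℓ g) := pderiv_contDiff ℓ hg
    set M : ℕ → ℝ := fun j => ⨆ t ∈ cube (n+1) R, ‖(pderivDir ℓ)^[j] g t‖ with hM_def
    have hMnonneg : ∀ j, 0 ≤ M j := fun j => sup_cube_nonneg _ _
    have hM0 : ∀ t ∈ cube (n+1) R, ‖g t‖ ≤ M 0 := fun t ht =>
      le_sup_cube g hg1.continuous R ht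
    set A : ℝ := 2 * Real.pi * |lam ℓ| with hA_def
    set P : ℝ := Real.pi * |lam ℓ| with hP_def
    have hA : 0 < A := by positivity
    have hP : 0 < P := by positivity
    have hPA : P ≤ A := by rw [hA_def, hP_def]; nlinarith
    have step := stepA g hg1 lam ℓ hℓ R hR (M 0) hM0
    have IH := ih (pderivDir ℓ g) hg'
    -- rewrite iterates in IH
    simp only [← Function.iterate_succ_apply (pderivDir ℓ)] at IH
    have hC : (0:ℝ) ≤ (2*R)^n := by positivity
    have key : ‖∫ t in cube (n+1) R, ew lam t * pderivDir ℓ g t‖ / A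
        ≤ ‖∫ t in cube (n+1) R, ew lam t * (pderivDir ℓ)^[k+1] g t‖ / A ^ (k+1)
          + (2*R)^n * ∑ j ∈ Finset.range k, M (j+1) / P ^ (j + 1 + 1) := by
      calc ‖∫ t in cube (n+1) R, ew lam t * pderivDir ℓ g t‖ / A
          ≤ (‖∫ t in cube (n+1) R, ew lam t * (pderivDir ℓ)^[k+1] g t‖ / A ^ k
              + (2*R)^n * ∑ j ∈ Finset.range k,
                  (⨆ t ∈ cube (n+1) R, ‖(pderivDir ℓ)^[j+1] g t‖) / P ^ (j + 1)) / A := by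
            gcongr
        _ = ‖∫ t in cube (n+1) R, ew lam t * (pderivDir ℓ)^[k+1] g t‖ / A ^ (k+1)
            + ((2*R)^n * ∑ j ∈ Finset.range k, M (j+1) / P ^ (j + 1)) / A := by
            rw [add_div, div_div, ← pow_succ]
        _ ≤ ‖∫ t in cube (n+1) R, ew lam t * (pderivDir ℓ)^[k+1] g t‖ / A ^ (k+1)
            + (2*R)^n * ∑ j ∈ Finset.range k, M (j+1) / P ^ (j + 1 + 1) := by
            gcongr _ + ?_
            rw [mul_div_assoc]
            gcongr (2*R)^n * ?_
            rw [Finset.sum_div]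
            refine Finset.sum_le_sum fun j _ => ?_
            rw [div_div]
            gcongr
            · exact hMnonneg (j+1)
            · calc P ^ (j+1+1) = P ^ (j+1) * P := by ring
                _ ≤ P ^ (j+1) * A := by gcongr
    calc ‖∫ t in cube (n+1) R, ew lam t * g t‖
        ≤ ‖∫ t in cube (n+1) R, ew lam t * pderivDir ℓ g t‖ / A + (2*R)^n * (M 0 / P) := step
      _ ≤ ‖∫ t in cube (n+1) R, ew lam t * (pderivDir ℓ)^[k+1] g t‖ / A ^ (k+1)
          + (2*R)^n * ∑ j ∈ Finset.range k, M (j+1) / P ^ (j + 1 + 1) + (2*R)^n * (M 0 / P) := by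
          linarith
      _ = ‖∫ t in cube (n+1) R, ew lam t * (pderivDir ℓ)^[k+1] g t‖ / A ^ (k+1)
          + (2*R)^n * ∑ j ∈ Finset.range (k+1), M j / P ^ (j + 1) := by
          rw [Finset.sum_range_succ', mul_add]
          ring

/-- `k`-fold integration by parts for twisted integrals: if `λ_ℓ ≠ 0`, the twisted integral
of a `C^k` function `g` is bounded by `(2π|λ_ℓ|)^{-k}` times the twisted integral of the
`k`-th iterated partial derivative, plus boundary terms `(2R)^{d-1} ∑_{j=1}^k M_{j-1}/(π|λ_ℓ|)^j`. -/
theorem twisted_integral_iterated_integration_by_parts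
    {d : ℕ} (hd : 1 ≤ d) {k : ℕ} (hk : 1 ≤ k)
    (g : EuclideanSpace ℝ (Fin d) → ℂ) (hg : ContDiff ℝ (k : ℕ∞) g)
    (lam : EuclideanSpace ℝ (Fin d)) (ℓ : Fin d) (hℓ : lam ℓ ≠ 0)
    (R : ℝ) (hR : 0 < R) :
    ‖∫ t in cube d R,
        Complex.exp (2 * Real.pi * Complex.I * ((∑ i, lam i * t i : ℝ) : ℂ)) * g t‖
      ≤ ‖∫ t in cube d R,
            Complex.exp (2 * Real.pi * Complex.I * ((∑ i, lam i * t i : ℝ) : ℂ))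
              * (pderivDir ℓ)^[k] g t‖ / (2 * Real.pi * |lam ℓ|) ^ k
        + (2 * R) ^ (d - 1) *
            ∑ j ∈ Finset.range k,
              (⨆ t ∈ cube d R, ‖(pderivDir ℓ)^[j] g t‖) / (Real.pi * |lam ℓ|) ^ (j + 1) := by
  obtain ⟨n, rfl⟩ : ∃ n, d = n + 1 := ⟨d - 1, by omega⟩
  exact mainaux k g hg lam ℓ hℓ R hR
end
end

section
/- Let d ≥ 1, let g : ℝ^d → ℂ be smooth, let r > 0, M > 0, and let ℓ ∈ {1, …, d} be an index such that sup_{t ∈ ℝ^d} |(∂^j g/∂t_ℓ^j)(t)| ≤ M r^j for every j ≥ 0. If λ ∈ ℝ^d satisfies π|λ_ℓ| > r, then for every R > 0, |∫_{C_R(0)} e^{2πi⟨λ,t⟩} g(t) dt| ≤ (2R)^{d−1} · M / (π|λ_ℓ| − r). In particular, for λ with |λ_ℓ| ≥ B for a fixed B > r/π, the twisted integrals of g grow at most like R^{d−1}. -/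
open MeasureTheory

noncomputable section

section aux

open intervalIntegral

lemma oneD_bound (h : ℕ → ℝ → ℂ) (hc : ∀ j, Continuous (h j))
    (hder : ∀ j s, HasDerivAt (h j) (h (j+1) s) s)
    {M r : ℝ} (hM : 0 < M) (hr : 0 < r)
    (hb : ∀ j s, ‖h j s‖ ≤ M * r ^ j)
    {ω : ℝ} (hω : r < |ω|) {R : ℝ} (hR : 0 < R) :
    ‖∫ s in (-R)..R, Complex.exp (Complex.I * ω * s) * h 0 s‖ ≤ 2 * M / (|ω| - r) := by
  have hω0 : (0:ℝ) < |ω| := hr.trans hω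
  have hωne : ω ≠ 0 := fun h0 => by simp [h0] at hω0
  set c : ℂ := Complex.I * ω with hc_def
  have hcne : c ≠ 0 := by
    simp [hc_def, Complex.I_ne_zero, hωne]
  have hnormc : ‖c‖ = |ω| := by
    simp [hc_def, map_mul, Complex.norm_I, Complex.norm_real]
  have hnorme : ∀ s : ℝ, ‖Complex.exp (c * s)‖ = 1 := by
    intro s
    rw [Complex.norm_exp]
    simp [hc_def, Complex.mul_re]
  set F : ℕ → ℝ := fun j => ‖∫ s in (-R)..R, Complex.exp (c * s) * h j s‖ with hF
  have hF0 : ∀ j, 0 ≤ F j := fun j => norm_nonneg _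
  -- the exponential's antiderivative
  have hv : ∀ s : ℝ, HasDerivAt (fun s : ℝ => c⁻¹ * Complex.exp (c * s))
      (Complex.exp (c * s)) s := by
    intro s
    have h1 : HasDerivAt (fun s : ℝ => (s : ℂ)) 1 s := Complex.ofRealCLM.hasDerivAt
    have h2 : HasDerivAt (fun s : ℝ => c * s) c s := by
      simpa using h1.const_mul c
    have h3 : HasDerivAt (fun s : ℝ => Complex.exp (c * s)) (Complex.exp (c * s) * c) s :=
      h2.cexp
    have h4 := h3.const_mul c⁻¹
    have : c⁻¹ * (Complex.exp (c * s) * c) = Complex.exp (c * s) := by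
      field_simp
    simpa [this] using h4
  -- integration by parts step
  have step : ∀ j, F j ≤ 2 * (M * r ^ j) / |ω| + F (j+1) / |ω| := by
    intro j
    have hInt1 : IntervalIntegrable (h (j+1)) volume (-R) R :=
      (hc (j+1)).intervalIntegrable _ _
    have hInt2 : IntervalIntegrable (fun s : ℝ => Complex.exp (c * s)) volume (-R) R := by
      apply Continuous.intervalIntegrable
      exact Complex.continuous_exp.comp (continuous_const.mul Complex.continuous_ofReal)
    have ibp := integral_mul_deriv_eq_deriv_mul
      (u := h j) (u' := h (j+1)) (v := fun s : ℝ => c⁻¹ * Complex.exp (c * s))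
      (v' := fun s : ℝ => Complex.exp (c * s))
      (fun x _ => hder j x) (fun x _ => hv x) hInt1 hInt2
    have hmc : (∫ s in (-R)..R, Complex.exp (c * s) * h j s)
        = ∫ s in (-R)..R, h j s * Complex.exp (c * s) := by
      congr 1; ext s; ring
    have hmc2 : (∫ s in (-R)..R, h (j+1) s * (c⁻¹ * Complex.exp (c * s)))
        = c⁻¹ * ∫ s in (-R)..R, Complex.exp (c * s) * h (j+1) s := by
      rw [← intervalIntegral.integral_const_mul]
      congr 1; ext s; ring
    rw [hF]
    simp only
    rw [hmc, ibp, hmc2]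
    have hb1 : ‖h j R * (c⁻¹ * Complex.exp (c * R))‖ ≤ M * r ^ j / |ω| := by
      rw [norm_mul, norm_mul, norm_inv, hnormc, hnorme]
      rw [div_eq_mul_inv]
      have := hb j R
      gcongr
      · exact le_of_eq (mul_one _)
    have hb2 : ‖h j (-R) * (c⁻¹ * Complex.exp (c * (-R:ℝ)))‖ ≤ M * r ^ j / |ω| := by
      rw [norm_mul, norm_mul, norm_inv, hnormc, hnorme]
      rw [div_eq_mul_inv]
      have := hb j (-R)
      gcongr
      · exact le_of_eq (mul_one _)
    have hb3 : ‖c⁻¹ * ∫ s in (-R)..R, Complex.exp (c * s) * h (j+1) s‖ = F (j+1) / |ω| := by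
      rw [norm_mul, norm_inv, hnormc, div_eq_mul_inv, mul_comm]
    calc ‖h j R * (c⁻¹ * Complex.exp (c * (R:ℝ))) - h j (-R) * (c⁻¹ * Complex.exp (c * (-R:ℝ)))
            - c⁻¹ * ∫ s in (-R)..R, Complex.exp (c * s) * h (j+1) s‖
        ≤ ‖h j R * (c⁻¹ * Complex.exp (c * (R:ℝ))) - h j (-R) * (c⁻¹ * Complex.exp (c * (-R:ℝ)))‖
          + ‖c⁻¹ * ∫ s in (-R)..R, Complex.exp (c * s) * h (j+1) s‖ := norm_sub_le _ _
      _ ≤ (M * r ^ j / |ω| + M * r ^ j / |ω|) + F (j+1) / |ω| := by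
          rw [hb3]
          gcongr
          exact (norm_sub_le _ _).trans (add_le_add hb1 hb2)
      _ = 2 * (M * r ^ j) / |ω| + F (j+1) / |ω| := by ring
  -- crude bound
  have crude : ∀ j, F j ≤ M * r ^ j * (2 * R) := by
    intro j
    rw [hF]
    simp only
    have := intervalIntegral.norm_integral_le_of_norm_le_const
      (C := M * r ^ j) (a := -R) (b := R)
      (f := fun s => Complex.exp (c * s) * h j s) ?_
    · calc ‖∫ s in (-R)..R, Complex.exp (c * s) * h j s‖ ≤ M * r ^ j * |R - (-R)| := this
        _ = M * r ^ j * (2 * R) := by rw [abs_of_pos (by linarith)]; ring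
    · intro x _
      rw [norm_mul, hnorme, one_mul]
      exact hb j x
  set q : ℝ := r / |ω| with hq
  have hq0 : 0 ≤ q := le_of_lt (div_pos hr hω0)
  have hq1 : q < 1 := (div_lt_one hω0).mpr hω
  set C : ℝ := 2 * M / (|ω| - r) with hC
  have hsub : (0:ℝ) < |ω| - r := by linarith
  have key : ∀ N, F 0 ≤ C * (1 - q ^ N) + F N / |ω| ^ N := by
    intro N
    induction N with
    | zero => simp
    | succ N ih =>
      have hstep := step N
      have hdiv : F N / |ω| ^ N ≤ (2 * (M * r ^ N) / |ω| + F (N+1) / |ω|) / |ω| ^ N := by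
        gcongr
      have hexp : (2 * (M * r ^ N) / |ω| + F (N+1) / |ω|) / |ω| ^ N
          = 2 * M * r ^ N / |ω| ^ (N+1) + F (N+1) / |ω| ^ (N+1) := by
        rw [pow_succ]
        field_simp
        try ring
      have heq : C * (1 - q ^ N) + 2 * M * r ^ N / |ω| ^ (N+1) = C * (1 - q ^ (N+1)) := by
        rw [hC, hq]
        rw [div_pow, div_pow]
        field_simp
        try ring
      calc F 0 ≤ C * (1 - q ^ N) + F N / |ω| ^ N := ih
        _ ≤ C * (1 - q ^ N) + (2 * M * r ^ N / |ω| ^ (N+1) + F (N+1) / |ω| ^ (N+1)) := by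
            rw [← hexp]; gcongr
        _ = C * (1 - q ^ (N+1)) + F (N+1) / |ω| ^ (N+1) := by rw [← heq]; ring
  have bound : ∀ N, F 0 ≤ C + M * (2 * R) * q ^ N := by
    intro N
    have h1 : F N / |ω| ^ N ≤ M * (2 * R) * q ^ N := by
      rw [hq, div_pow, div_le_iff₀ (pow_pos hω0 N)] at *
      calc F N ≤ M * r ^ N * (2 * R) := crude N
        _ = M * (2 * R) * (r ^ N / |ω| ^ N) * |ω| ^ N := by
            field_simp
    have h2 : C * (1 - q ^ N) ≤ C := by
      have : 0 ≤ C := by positivity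
      nlinarith [pow_nonneg hq0 N]
    calc F 0 ≤ C * (1 - q ^ N) + F N / |ω| ^ N := key N
      _ ≤ C + M * (2 * R) * q ^ N := add_le_add h2 h1
  have hlim : Filter.Tendsto (fun N : ℕ => C + M * (2 * R) * q ^ N) Filter.atTop (nhds C) := by
    have := (tendsto_pow_atTop_nhds_zero_of_lt_one hq0 hq1).const_mul (M * (2 * R))
    simpa using Filter.Tendsto.const_add C this
  exact ge_of_tendsto' hlim (fun N => bound N)

lemma contDiff_iter {d : ℕ} (ℓ : Fin d) (g : EuclideanSpace ℝ (Fin d) → ℂ)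
    (hg : ContDiff ℝ (⊤ : ℕ∞) g) (j : ℕ) :
    ContDiff ℝ (⊤ : ℕ∞) ((pderivDir ℓ)^[j] g) := by
  induction j with
  | zero => simpa using hg
  | succ j ih =>
    rw [Function.iterate_succ_apply']
    exact (ContinuousLinearMap.apply ℝ ℂ (EuclideanSpace.single ℓ 1)).contDiff.comp
      (ih.fderiv_right (m := (⊤:ℕ∞)) (by exact_mod_cast le_rfl))

end aux

set_option maxHeartbeats 1000000 in
/-- For a smooth function whose iterated partial derivatives in direction `ℓ` grow at most
like `M r^j`, the twisted integral with `π|λ_ℓ| > r` is bounded by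
`(2R)^{d-1} M / (π|λ_ℓ| - r)`. -/
theorem twisted_integral_gevrey_bound
    {d : ℕ} (hd : 1 ≤ d) (g : EuclideanSpace ℝ (Fin d) → ℂ)
    (hg : ContDiff ℝ (⊤ : ℕ∞) g) (r M : ℝ) (hr : 0 < r) (hM : 0 < M)
    (ℓ : Fin d)
    (hbound : ∀ j : ℕ, ∀ t, ‖(pderivDir ℓ)^[j] g t‖ ≤ M * r ^ j)
    (lam : EuclideanSpace ℝ (Fin d)) (hlam : r < Real.pi * |lam ℓ|)
    (R : ℝ) (hR : 0 < R) :
    ‖∫ t in cube d R,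
        Complex.exp (2 * Real.pi * Complex.I * ((∑ i, lam i * t i : ℝ) : ℂ)) * g t‖
      ≤ (2 * R) ^ (d - 1) * M / (Real.pi * |lam ℓ| - r) := by
  classical
  have hlamℓ : 0 < |lam ℓ| := by
    by_contra hcon
    push_neg at hcon
    have : |lam ℓ| = 0 := le_antisymm hcon (abs_nonneg _)
    rw [this, mul_zero] at hlam; linarith
  have hden : 0 < Real.pi * |lam ℓ| - r := by linarith
  -- the integrand
  set f : EuclideanSpace ℝ (Fin d) → ℂ :=
    fun t => Complex.exp (2 * Real.pi * Complex.I * ((∑ i, lam i * t i : ℝ) : ℂ)) * g t with hf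
  have hnorm_exp : ∀ x : ℝ, ‖Complex.exp (2 * Real.pi * Complex.I * (x : ℂ))‖ = 1 := by
    intro x
    rw [Complex.norm_exp]
    have : (2 * Real.pi * Complex.I * (x : ℂ)).re = 0 := by simp [Complex.mul_re]
    rw [this, Real.exp_zero]
  have hfbound : ∀ t, ‖f t‖ ≤ M := by
    intro t
    rw [hf]
    simp only
    rw [norm_mul, hnorm_exp, one_mul]
    simpa using hbound 0 t
  have hfcont : Continuous f := by
    apply Continuous.mul
    · apply Complex.continuous_exp.comp
      apply Continuous.mul continuous_const
      apply Complex.continuous_ofReal.comp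
      exact continuous_finset_sum _ fun i _ =>
        continuous_const.mul (EuclideanSpace.proj (𝕜 := ℝ) i).continuous
    · exact hg.continuous
  -- equivalences
  set p : Fin d → Prop := fun i => i ≠ ℓ with hp
  haveI : DecidablePred p := fun i => instDecidableNot
  letI hUniq : Unique {i : Fin d // ¬ p i} :=
    ⟨⟨⟨ℓ, by simp [hp]⟩⟩, fun a => Subtype.ext (by simpa [hp] using a.2)⟩
  letI : Fintype {i : Fin d // ¬ p i} := Unique.fintype
  set e := (MeasurableEquiv.toLp 2 (Fin d → ℝ)).symm with he
  set φ := MeasurableEquiv.piEquivPiSubtypeProd (fun _ : Fin d => ℝ) p with hφ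
  set ψ := (MeasurableEquiv.funUnique {i : Fin d // ¬ p i} ℝ).symm with hψ
  set S : Set (Fin d → ℝ) := Set.univ.pi fun _ => Set.Icc (-R) R with hS
  set S2 : Set ({i : Fin d // p i} → ℝ) := Set.univ.pi fun _ => Set.Icc (-R) R with hS2
  set S1 : Set ({i : Fin d // ¬ p i} → ℝ) := Set.univ.pi fun _ => Set.Icc (-R) R with hS1
  -- Step 1: pass to the pi type
  have hset1 : ⇑e.symm ⁻¹' cube d R = S := by
    ext x
    simp only [Set.mem_preimage, hS, Set.mem_pi, Set.mem_univ, forall_true_left,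
      Set.mem_Icc, cube, Set.mem_setOf_eq, he, MeasurableEquiv.symm_symm, MeasurableEquiv.coe_toLp,
      PiLp.toLp_apply]
    constructor
    · intro hx i; rw [← abs_le]; exact hx i
    · intro hx i; rw [abs_le]; exact hx i
  have step1 : ∫ t in cube d R, f t = ∫ x in S, f (e.symm x) := by
    rw [← ((EuclideanSpace.volume_preserving_symm_measurableEquiv_toLp (Fin d)).symm _).setIntegral_preimage_emb
      ((MeasurableEquiv.toLp 2 (Fin d → ℝ)).symm).symm.measurableEmbedding f (cube d R), hset1]
  -- Step 2: split off coordinate ℓ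
  have happ1 : ∀ (z : ({i : Fin d // p i} → ℝ) × ({i : Fin d // ¬ p i} → ℝ))
      (i : {i : Fin d // p i}), φ.symm z i.1 = z.1 i := by
    intro z i
    show (Equiv.piEquivPiSubtypeProd p (fun _ => ℝ)).symm z i.1 = z.1 i
    rw [Equiv.piEquivPiSubtypeProd_symm_apply, dif_pos i.2]
  have happ2 : ∀ (z : ({i : Fin d // p i} → ℝ) × ({i : Fin d // ¬ p i} → ℝ))
      (i : {i : Fin d // ¬ p i}), φ.symm z i.1 = z.2 i := by
    intro z i
    show (Equiv.piEquivPiSubtypeProd p (fun _ => ℝ)).symm z i.1 = z.2 i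
    rw [Equiv.piEquivPiSubtypeProd_symm_apply, dif_neg i.2]
  have hset2 : ⇑φ.symm ⁻¹' S = S2 ×ˢ S1 := by
    ext z
    simp only [Set.mem_preimage, hS, hS2, hS1, Set.mem_pi, Set.mem_univ, forall_true_left,
      Set.mem_prod]
    constructor
    · intro hz
      exact ⟨fun i => (happ1 z i) ▸ hz i.1, fun i => (happ2 z i) ▸ hz i.1⟩
    · intro hz i
      by_cases hi : p i
      · rw [show i = (⟨i, hi⟩ : {i : Fin d // p i}).1 from rfl, happ1 z ⟨i, hi⟩]
        exact hz.1 ⟨i, hi⟩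
      · rw [show i = (⟨i, hi⟩ : {i : Fin d // ¬ p i}).1 from rfl, happ2 z ⟨i, hi⟩]
        exact hz.2 ⟨i, hi⟩
  have step2 : ∫ x in S, f (e.symm x) = ∫ z in S2 ×ˢ S1, f (e.symm (φ.symm z)) := by
    rw [← ((volume_preserving_piEquivPiSubtypeProd (fun _ : Fin d => ℝ) p).symm _).setIntegral_preimage_emb
      φ.symm.measurableEmbedding (fun x => f (e.symm x)) S, hset2]
    congr!
  -- volume computations
  have hcard : Fintype.card {i : Fin d // p i} = d - 1 := by
    have : Fintype.card {i : Fin d // ¬ (i = ℓ)} = d - 1 := by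
      rw [Fintype.card_subtype_compl, Fintype.card_subtype_eq, Fintype.card_fin]
    exact this
  have hvolS2 : volume S2 = ENNReal.ofReal (2 * R) ^ (d - 1) := by
    rw [hS2, volume_pi_pi]
    simp [Real.volume_Icc, hcard, two_mul, Finset.prod_const]
  have hvolS1 : volume S1 = ENNReal.ofReal (2 * R) ^ (Fintype.card {i : Fin d // ¬ p i}) := by
    rw [hS1, volume_pi_pi]
    simp [Real.volume_Icc, two_mul, Finset.prod_const]
  have hS2fin : volume S2 < ⊤ := by
    rw [hvolS2]; exact ENNReal.pow_lt_top ENNReal.ofReal_lt_top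
  have hS2toReal : (volume S2).toReal = (2 * R) ^ (d - 1) := by
    rw [hvolS2, ENNReal.toReal_pow, ENNReal.toReal_ofReal (by linarith)]
  -- integrability over the product
  have hmeasG : Measurable fun z : ({i : Fin d // p i} → ℝ) × ({i : Fin d // ¬ p i} → ℝ) =>
      f (e.symm (φ.symm z)) :=
    (hfcont.measurable.comp e.symm.measurable).comp φ.symm.measurable
  have hIntG : IntegrableOn (fun z => f (e.symm (φ.symm z))) (S2 ×ˢ S1)
      (volume.prod volume) := by
    apply Measure.integrableOn_of_bounded (M := M)
    · rw [Measure.prod_prod, hvolS2, hvolS1]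
      exact (ENNReal.mul_lt_top (ENNReal.pow_lt_top ENNReal.ofReal_lt_top)
        (ENNReal.pow_lt_top ENNReal.ofReal_lt_top)).ne
    · exact hmeasG.aestronglyMeasurable
    · exact Filter.Eventually.of_forall fun z => hfbound _
  have hIntG' : Integrable (fun z => f (e.symm (φ.symm z)))
      ((volume.restrict S2).prod (volume.restrict S1)) := by
    rwa [IntegrableOn, ← Measure.prod_restrict] at hIntG
  have step3 : ∫ z in S2 ×ˢ S1, f (e.symm (φ.symm z))
      = ∫ w in S2, ∫ y in S1, f (e.symm (φ.symm (w, y))) := by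
    rw [Measure.volume_eq_prod]
    exact setIntegral_prod _ hIntG
  -- inner bound
  have hωabs : |2 * Real.pi * lam ℓ| = 2 * Real.pi * |lam ℓ| := by
    rw [abs_mul, abs_of_pos (by positivity : (0:ℝ) < 2 * Real.pi)]
  have hrω : r < |2 * Real.pi * lam ℓ| := by
    rw [hωabs]; nlinarith [Real.pi_pos, hlamℓ]
  have inner_bound : ∀ w : {i : Fin d // p i} → ℝ,
      ‖∫ y in S1, f (e.symm (φ.symm (w, y)))‖ ≤ M / (Real.pi * |lam ℓ| - r) := by
    intro w
    set L : ℝ → EuclideanSpace ℝ (Fin d) := fun s => e.symm (φ.symm (w, fun _ => s)) with hLdef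
    have hLapp : ∀ (s : ℝ) (i : Fin d), L s i = if h : p i then w ⟨i, h⟩ else s := by
      intro s i
      show (Equiv.piEquivPiSubtypeProd p (fun _ => ℝ)).symm (w, fun _ => s) i = _
      rw [Equiv.piEquivPiSubtypeProd_symm_apply]
    have hLnotp : ¬ p ℓ := by simp [hp]
    have hLeq : L = fun s => L 0 + s • (EuclideanSpace.single ℓ (1:ℝ)) := by
      funext s
      ext i
      simp only [PiLp.add_apply, PiLp.smul_apply, EuclideanSpace.single_apply, smul_eq_mul]
      by_cases hi : p i
      · rw [hLapp s i, hLapp 0 i, dif_pos hi, dif_pos hi, if_neg (by exact hi), mul_zero,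
          add_zero]
      · have hiℓ : i = ℓ := not_not.mp hi
        rw [hLapp s i, hLapp 0 i, dif_neg hi, dif_neg hi, if_pos hiℓ, mul_one, zero_add]
    have hLcont : Continuous L := by
      rw [hLeq]
      exact continuous_const.add (continuous_id.smul continuous_const)
    have hcurve : ∀ s : ℝ, HasDerivAt L (EuclideanSpace.single ℓ (1:ℝ)) s := by
      intro s
      rw [hLeq]
      simpa using (((hasDerivAt_id s).smul_const (EuclideanSpace.single ℓ (1:ℝ))).const_add
        (L 0))
    set K : ℝ := ∑ i ∈ Finset.univ.erase ℓ, lam i * L 0 i with hK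
    set c0 : ℂ := Complex.exp (2 * Real.pi * Complex.I * (K : ℂ)) with hc0
    have hc0norm : ‖c0‖ = 1 := hnorm_exp K
    set h : ℕ → ℝ → ℂ := fun j s => c0 * ((pderivDir ℓ)^[j] g (L s)) with hh
    have hc : ∀ j, Continuous (h j) := fun j =>
      continuous_const.mul ((contDiff_iter ℓ g hg j).continuous.comp hLcont)
    have hder : ∀ j s, HasDerivAt (h j) (h (j+1) s) s := by
      intro j s
      have hF := contDiff_iter ℓ g hg j
      have hdiff : DifferentiableAt ℝ ((pderivDir ℓ)^[j] g) (L s) :=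
        (hF.differentiable (by simp)).differentiableAt
      have hcomp := (hdiff.hasFDerivAt.comp_hasDerivAt s (hcurve s)).const_mul c0
      have : h (j+1) s = c0 * (fderiv ℝ ((pderivDir ℓ)^[j] g) (L s))
          (EuclideanSpace.single ℓ 1) := by
        rw [hh]
        simp only
        rw [Function.iterate_succ_apply']
        rfl
      rw [this]
      exact hcomp
    have hb : ∀ j s, ‖h j s‖ ≤ M * r ^ j := by
      intro j s
      rw [hh]
      simp only
      rw [norm_mul, hc0norm, one_mul]
      exact hbound j (L s)
    have oneD := oneD_bound h hc hder hM hr hb hrω hR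
    -- identify the integrals
    have hψpre : ⇑ψ ⁻¹' S1 = Set.Icc (-R) R := by
      ext s
      simp only [Set.mem_preimage, hS1, Set.mem_pi, Set.mem_univ, forall_true_left, hψ]
      constructor
      · intro hs
        exact hs default
      · intro hs i
        exact hs
    have red1 : ∫ y in S1, f (e.symm (φ.symm (w, y)))
        = ∫ s in Set.Icc (-R) R, f (L s) := by
      have hpre := ((volume_preserving_funUnique {i : Fin d // ¬ p i} ℝ).symm _).setIntegral_preimage_emb
        ψ.measurableEmbedding (fun y => f (e.symm (φ.symm (w, y)))) S1
      rw [hψpre] at hpre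
      exact hpre.symm
    have red2 : ∫ s in Set.Icc (-R) R, f (L s) = ∫ s in (-R)..R, f (L s) := by
      rw [MeasureTheory.integral_Icc_eq_integral_Ioc,
        intervalIntegral.integral_of_le (by linarith : -R ≤ R)]
    have hsum : ∀ s : ℝ, (∑ i, lam i * L s i) = lam ℓ * s + K := by
      intro s
      rw [hK, ← Finset.add_sum_erase _ _ (Finset.mem_univ ℓ)]
      congr 1
      · rw [hLapp s ℓ, dif_neg hLnotp]
      · apply Finset.sum_congr rfl
        intro i hi
        have hiℓ : p i := Finset.ne_of_mem_erase hi
        rw [hLapp s i, hLapp 0 i, dif_pos hiℓ, dif_pos hiℓ]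
    have hinteq : ∀ s : ℝ, f (L s)
        = Complex.exp (Complex.I * ((2 * Real.pi * lam ℓ : ℝ) : ℂ) * (s : ℂ)) * h 0 s := by
      intro s
      rw [hf]
      simp only [hh, Function.iterate_zero_apply]
      rw [hsum s, hc0]
      rw [← mul_assoc, ← Complex.exp_add]
      congr 2
      push_cast
      ring
    calc ‖∫ y in S1, f (e.symm (φ.symm (w, y)))‖
        = ‖∫ s in (-R)..R,
            Complex.exp (Complex.I * ((2 * Real.pi * lam ℓ : ℝ) : ℂ) * (s : ℂ)) * h 0 s‖ := by
          rw [red1, red2]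
          congr 1
          apply intervalIntegral.integral_congr
          intro s _
          exact hinteq s
      _ ≤ 2 * M / (|2 * Real.pi * lam ℓ| - r) := oneD
      _ ≤ M / (Real.pi * |lam ℓ| - r) := by
          rw [hωabs, div_le_div_iff₀ (by nlinarith [Real.pi_pos, hlamℓ]) hden]
          nlinarith [Real.pi_pos, hlamℓ, hM.le, hr.le]
  -- conclude
  have hmeas_outer : AEStronglyMeasurable
      (fun w => ∫ y in S1, f (e.symm (φ.symm (w, y)))) (volume.restrict S2) :=
    hIntG'.integral_prod_left.aestronglyMeasurable
  calc ‖∫ t in cube d R, f t‖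
      = ‖∫ w in S2, ∫ y in S1, f (e.symm (φ.symm (w, y)))‖ := by
        rw [step1, step2, step3]
    _ ≤ (M / (Real.pi * |lam ℓ| - r)) * (volume S2).toReal :=
        norm_setIntegral_le_of_norm_le_const hS2fin (fun w _ => inner_bound w)
    _ = (2 * R) ^ (d - 1) * M / (Real.pi * |lam ℓ| - r) := by
        rw [hS2toReal, mul_comm, mul_div_assoc]
end
end

section
/- Let d ≥ 1, let v = (v_1, …, v_d) : ℝ^d → ℂ^d be continuously differentiable, let λ ∈ ℝ^d, let R > 0 and let M ≥ sup_{x ∈ C_R(0)} max_{1 ≤ ℓ ≤ d} |v_ℓ(x)|. Then |∫_{C_R(0)} e^{2πi⟨λ,x⟩} ( ∑_{ℓ=1}^d (∂v_ℓ/∂x_ℓ)(x) + 2πi ∑_{ℓ=1}^d λ_ℓ v_ℓ(x) ) dx| ≤ 2d (2R)^{d−1} M. -/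
open MeasureTheory

noncomputable section

/-- Divergence-theorem estimate: the twisted integral of the divergence-type expression
`∑_ℓ ∂v_ℓ/∂x_ℓ + 2πi ∑_ℓ λ_ℓ v_ℓ` over the cube is bounded by the surface term
`2d (2R)^{d-1} M`, where `M` bounds the components of `v` on the cube. -/
theorem twisted_divergence_boundary_bound
    {d : ℕ} (hd : 1 ≤ d) (v : EuclideanSpace ℝ (Fin d) → Fin d → ℂ)
    (hv : ContDiff ℝ 1 v) (lam : EuclideanSpace ℝ (Fin d)) (R : ℝ) (hR : 0 < R)
    (M : ℝ) (hM : ∀ x ∈ cube d R, ∀ ℓ, ‖v x ℓ‖ ≤ M) :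
    ‖∫ x in cube d R,
        Complex.exp (2 * Real.pi * Complex.I * ((∑ i, lam i * x i : ℝ) : ℂ)) *
          ((∑ ℓ, fderiv ℝ (fun y => v y ℓ) x (EuclideanSpace.single ℓ 1))
            + 2 * Real.pi * Complex.I * ∑ ℓ, ((lam ℓ : ℝ) : ℂ) * v x ℓ)‖
      ≤ 2 * d * (2 * R) ^ (d - 1) * M := by
  obtain ⟨n, rfl⟩ : ∃ n, d = n + 1 := ⟨d - 1, (Nat.succ_pred_eq_of_pos hd).symm⟩
  set φ : EuclideanSpace ℝ (Fin (n + 1)) ≃L[ℝ] (Fin (n + 1) → ℝ) :=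
    EuclideanSpace.equiv (Fin (n + 1)) ℝ with hφ
  have hφsingle : ∀ ℓ : Fin (n + 1), φ.symm (Pi.single ℓ 1) = EuclideanSpace.single ℓ 1 :=
    fun ℓ => rfl
  set a : Fin (n + 1) → ℝ := fun _ => -R with ha
  set b : Fin (n + 1) → ℝ := fun _ => R with hb
  have hle : a ≤ b := fun i => by simp only [ha, hb]; linarith
  -- the linear functional `y ↦ ∑ i, lam i * y i`
  set L0 : (Fin (n + 1) → ℝ) →L[ℝ] ℝ := ∑ i, lam i • ContinuousLinearMap.proj i with hL0
  have hL0app : ∀ y : Fin (n + 1) → ℝ, L0 y = ∑ i, lam i * y i := by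
    intro y
    simp [hL0, ContinuousLinearMap.sum_apply, ContinuousLinearMap.proj_apply]
  set Λ : (Fin (n + 1) → ℝ) →L[ℝ] ℂ := (2 * Real.pi * Complex.I) • (Complex.ofRealCLM.comp L0) with hΛ
  -- the phase
  set p : (Fin (n + 1) → ℝ) → ℂ := fun y => Complex.exp (2 * Real.pi * Complex.I * (L0 y : ℂ)) with hp
  have hpderiv : ∀ y, HasFDerivAt p (p y • Λ) y := by
    intro y
    have h1 : HasFDerivAt (fun y : Fin (n + 1) → ℝ => ((L0 y : ℝ) : ℂ)) (Complex.ofRealCLM.comp L0) y :=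
      (Complex.ofRealCLM.hasFDerivAt).comp y L0.hasFDerivAt
    exact (h1.const_mul (2 * Real.pi * Complex.I)).cexp
  have hpc : Continuous p :=
    Complex.continuous_exp.comp
      (continuous_const.mul (Complex.continuous_ofReal.comp L0.continuous))
  have hpnorm : ∀ y, ‖p y‖ = 1 := by
    intro y
    have h2 : (2 * Real.pi * Complex.I * ((L0 y : ℝ) : ℂ))
        = ((2 * Real.pi * L0 y : ℝ) : ℂ) * Complex.I := by push_cast; ring
    rw [hp]
    simp only [h2, Complex.norm_exp_ofReal_mul_I]
  -- differentiability of components of `v`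
  have hvd : Differentiable ℝ v := hv.differentiable one_ne_zero
  have hdiffℓ : ∀ (ℓ) (x : EuclideanSpace ℝ (Fin (n + 1))), DifferentiableAt ℝ (fun y => v y ℓ) x := fun ℓ x =>
    ((ContinuousLinearMap.proj ℓ : (Fin (n + 1) → ℂ) →L[ℝ] ℂ)).differentiableAt.comp x (hvd x)
  -- the vector field and its derivative
  set f : Fin (n + 1) → (Fin (n + 1) → ℝ) → ℂ := fun ℓ y => p y * v (φ.symm y) ℓ with hf
  set f' : Fin (n + 1) → (Fin (n + 1) → ℝ) → (Fin (n + 1) → ℝ) →L[ℝ] ℂ := fun ℓ y =>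
    p y • ((fderiv ℝ (fun z => v z ℓ) (φ.symm y)).comp (φ.symm : (Fin (n + 1) → ℝ) →L[ℝ] EuclideanSpace ℝ (Fin (n + 1))))
      + v (φ.symm y) ℓ • (p y • Λ) with hf'
  have hfd : ∀ (y) (ℓ), HasFDerivAt (f ℓ) (f' ℓ y) y := by
    intro y ℓ
    have h1 : HasFDerivAt (fun z : Fin (n + 1) → ℝ => v (φ.symm z) ℓ)
        ((fderiv ℝ (fun z => v z ℓ) (φ.symm y)).comp (φ.symm : (Fin (n + 1) → ℝ) →L[ℝ] EuclideanSpace ℝ (Fin (n + 1)))) y :=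
      ((hdiffℓ ℓ (φ.symm y)).hasFDerivAt).comp y φ.symm.hasFDerivAt
    exact (hpderiv y).mul h1
  have hfc : ∀ ℓ, Continuous (f ℓ) := fun ℓ =>
    hpc.mul ((continuous_apply ℓ).comp (hv.continuous.comp φ.symm.continuous))
  -- the divergence
  have hΛapp : ∀ ℓ : Fin (n + 1), Λ (Pi.single ℓ 1) = 2 * Real.pi * Complex.I * (lam ℓ : ℂ) := by
    intro ℓ
    have hL0s : L0 (Pi.single ℓ 1) = lam ℓ := by
      rw [hL0app]
      simp [Pi.single_apply, mul_ite]
    simp [hΛ, hL0s, smul_eq_mul]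
  have hdiv : ∀ y : Fin (n + 1) → ℝ, (∑ ℓ, f' ℓ y (Pi.single ℓ 1)) =
      p y * ((∑ ℓ, fderiv ℝ (fun z => v z ℓ) (φ.symm y) (EuclideanSpace.single ℓ 1))
        + 2 * Real.pi * Complex.I * ∑ ℓ, ((lam ℓ : ℝ) : ℂ) * v (φ.symm y) ℓ) := by
    intro y
    simp only [hf', ContinuousLinearMap.add_apply, ContinuousLinearMap.smul_apply,
      ContinuousLinearMap.comp_apply, ContinuousLinearEquiv.coe_coe, hφsingle, hΛapp,
      smul_eq_mul]
    rw [Finset.sum_add_distrib, mul_add, Finset.mul_sum, Finset.mul_sum, Finset.mul_sum]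
    congr 1
    exact Finset.sum_congr rfl fun ℓ _ => by ring
  -- continuity of the divergence
  have hfderiv_c : ∀ ℓ : Fin (n + 1), Continuous
      (fun y : Fin (n + 1) → ℝ => fderiv ℝ (fun z => v z ℓ) (φ.symm y) (EuclideanSpace.single ℓ 1)) := by
    intro ℓ
    have hcomp : ∀ x : EuclideanSpace ℝ (Fin (n + 1)), fderiv ℝ (fun z => v z ℓ) x =
        (ContinuousLinearMap.proj ℓ : (Fin (n + 1) → ℂ) →L[ℝ] ℂ).comp (fderiv ℝ v x) := by
      intro x
      have h := fderiv_comp (𝕜 := ℝ)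
        (g := (ContinuousLinearMap.proj ℓ : (Fin (n + 1) → ℂ) →L[ℝ] ℂ)) (f := v) x
        ((ContinuousLinearMap.proj ℓ : (Fin (n + 1) → ℂ) →L[ℝ] ℂ)).differentiableAt (hvd x)
      simpa [Function.comp_def, ContinuousLinearMap.fderiv] using h
    simp only [hcomp, ContinuousLinearMap.comp_apply, ContinuousLinearMap.proj_apply]
    have h1 : Continuous fun y : Fin (n + 1) → ℝ => fderiv ℝ v (φ.symm y) :=
      (hv.continuous_fderiv one_ne_zero).comp φ.symm.continuous
    exact (continuous_apply ℓ).comp (h1.clm_apply continuous_const)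
  have Hdivc : Continuous fun y : Fin (n + 1) → ℝ => ∑ ℓ, f' ℓ y (Pi.single ℓ 1) := by
    rw [show (fun y : Fin (n + 1) → ℝ => ∑ ℓ, f' ℓ y (Pi.single ℓ 1)) = fun y : Fin (n + 1) → ℝ =>
      p y * ((∑ ℓ, fderiv ℝ (fun z => v z ℓ) (φ.symm y) (EuclideanSpace.single ℓ 1))
        + 2 * Real.pi * Complex.I * ∑ ℓ, ((lam ℓ : ℝ) : ℂ) * v (φ.symm y) ℓ)
      from funext hdiv]
    exact hpc.mul ((continuous_finset_sum _ fun ℓ _ => hfderiv_c ℓ).add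
      (continuous_const.mul (continuous_finset_sum _ fun ℓ _ =>
        continuous_const.mul ((continuous_apply ℓ).comp (hv.continuous.comp φ.symm.continuous)))))
  have Hi : IntegrableOn (fun y => ∑ ℓ, f' ℓ y (Pi.single ℓ 1)) (Set.Icc a b) :=
    Hdivc.continuousOn.integrableOn_compact isCompact_Icc
  -- divergence theorem
  have key := integral_divergence_of_hasFDerivAt_off_countable' a b hle f f' ∅
    Set.countable_empty (fun ℓ => (hfc ℓ).continuousOn) (fun x _ ℓ => hfd x ℓ) Hi
  -- transfer the integral from the Euclidean space to the pi space
  set e : EuclideanSpace ℝ (Fin (n + 1)) ≃ᵐ (Fin (n + 1) → ℝ) := (MeasurableEquiv.toLp 2 (Fin (n + 1) → ℝ)).symm with he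
  have hepre : e ⁻¹' Set.Icc a b = cube (n + 1) R := by
    ext x
    simp only [Set.mem_preimage, Set.mem_Icc, cube, Set.mem_setOf_eq]
    constructor
    · rintro ⟨h1, h2⟩ i
      exact abs_le.2 ⟨h1 i, h2 i⟩
    · intro h
      exact ⟨fun i => (abs_le.1 (h i)).1, fun i => (abs_le.1 (h i)).2⟩
  have hGx : ∀ x : EuclideanSpace ℝ (Fin (n + 1)),
      Complex.exp (2 * Real.pi * Complex.I * ((∑ i, lam i * x i : ℝ) : ℂ)) *
          ((∑ ℓ, fderiv ℝ (fun y => v y ℓ) x (EuclideanSpace.single ℓ 1))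
            + 2 * Real.pi * Complex.I * ∑ ℓ, ((lam ℓ : ℝ) : ℂ) * v x ℓ)
        = ∑ ℓ, f' ℓ (e x) (Pi.single ℓ 1) := by
    intro x
    rw [hdiv (e x)]
    have h1 : φ.symm (e x) = x := rfl
    rw [h1]
    have h2 : L0 (e x) = ∑ i, lam i * x i := (hL0app (e x)).trans rfl
    simp only [hp, h2]
  have hint : (∫ x in cube (n + 1) R,
      Complex.exp (2 * Real.pi * Complex.I * ((∑ i, lam i * x i : ℝ) : ℂ)) *
        ((∑ ℓ, fderiv ℝ (fun y => v y ℓ) x (EuclideanSpace.single ℓ 1))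
          + 2 * Real.pi * Complex.I * ∑ ℓ, ((lam ℓ : ℝ) : ℂ) * v x ℓ))
      = ∫ y in Set.Icc a b, ∑ ℓ, f' ℓ y (Pi.single ℓ 1) := by
    rw [← hepre, ← (EuclideanSpace.volume_preserving_symm_measurableEquiv_toLp
      (Fin (n + 1))).setIntegral_preimage_emb e.measurableEmbedding]
    exact setIntegral_congr_fun (e.measurable measurableSet_Icc)
      fun x _ => hGx x
  rw [hint, key]
  -- bound the face integrals
  have hM0 : 0 ≤ M := by
    refine le_trans (norm_nonneg (v 0 ⟨0, Nat.succ_pos n⟩)) (hM 0 ?_ _)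
    intro i
    show |(0 : ℝ)| ≤ R
    simpa using hR.le
  have hface : ∀ (ℓ : Fin (n + 1)) (c : ℝ), |c| ≤ R →
      ‖∫ x in Set.Icc (a ∘ ℓ.succAbove) (b ∘ ℓ.succAbove), f ℓ (ℓ.insertNth c x)‖
        ≤ (2 * R) ^ n * M := by
    intro ℓ c hc
    have hvol : volume (Set.Icc (a ∘ ℓ.succAbove) (b ∘ ℓ.succAbove))
        = ENNReal.ofReal ((2 * R) ^ n) := by
      rw [Real.volume_Icc_pi]
      have hco : ∀ i : Fin n, (b ∘ ℓ.succAbove) i - (a ∘ ℓ.succAbove) i = 2 * R := by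
        intro i
        simp only [Function.comp_apply, ha, hb, sub_neg_eq_add]
        ring
      simp only [hco]
      rw [Finset.prod_const, Finset.card_univ, Fintype.card_fin,
        ← ENNReal.ofReal_pow (by positivity)]
    have hbd : ∀ x ∈ Set.Icc (a ∘ ℓ.succAbove) (b ∘ ℓ.succAbove), ‖f ℓ (ℓ.insertNth c x)‖ ≤ M := by
      intro x hx
      rw [Set.mem_Icc] at hx
      have hmem : φ.symm (ℓ.insertNth c x) ∈ cube (n + 1) R := by
        intro i
        rcases eq_or_ne i ℓ with heq | hne
        · have hv1 : φ.symm (ℓ.insertNth c x) i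
              = Fin.insertNth (α := fun _ => ℝ) ℓ c x i := rfl
          rw [hv1, heq, Fin.insertNth_apply_same]
          exact hc
        · obtain ⟨j, rfl⟩ := Fin.exists_succAbove_eq hne
          have hv2 : φ.symm (ℓ.insertNth c x) (ℓ.succAbove j)
              = Fin.insertNth (α := fun _ => ℝ) ℓ c x (ℓ.succAbove j) := rfl
          rw [hv2, Fin.insertNth_apply_succAbove, abs_le]
          exact ⟨hx.1 j, hx.2 j⟩
      calc ‖f ℓ (ℓ.insertNth c x)‖
          = ‖p (ℓ.insertNth c x)‖ * ‖v (φ.symm (ℓ.insertNth c x)) ℓ‖ := norm_mul _ _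
        _ ≤ 1 * M := by
            rw [hpnorm]
            exact mul_le_mul_of_nonneg_left (hM _ hmem ℓ) zero_le_one
        _ = M := one_mul M
    have hmeas : AEStronglyMeasurable (fun x => f ℓ (ℓ.insertNth c x))
        (volume.restrict (Set.Icc (a ∘ ℓ.succAbove) (b ∘ ℓ.succAbove))) :=
      ((hfc ℓ).comp ((continuous_const).finInsertNth ℓ continuous_id)).aestronglyMeasurable
    have h := norm_setIntegral_le_of_norm_le_const (μ := volume)
      (by rw [hvol]; exact ENNReal.ofReal_lt_top) hbd
    rw [measureReal_def, hvol, ENNReal.toReal_ofReal (by positivity)] at h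
    linarith [h]
  calc ‖∑ ℓ : Fin (n + 1),
        ((∫ x in Set.Icc (a ∘ ℓ.succAbove) (b ∘ ℓ.succAbove), f ℓ (ℓ.insertNth (b ℓ) x)) -
          ∫ x in Set.Icc (a ∘ ℓ.succAbove) (b ∘ ℓ.succAbove), f ℓ (ℓ.insertNth (a ℓ) x))‖
      ≤ ∑ ℓ : Fin (n + 1), ((2 * R) ^ n * M + (2 * R) ^ n * M) := by
        refine (norm_sum_le _ _).trans (Finset.sum_le_sum fun ℓ _ => ?_)
        refine (norm_sub_le _ _).trans (add_le_add ?_ ?_)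
        · exact hface ℓ (b ℓ) (by rw [hb]; simp [abs_of_pos hR])
        · exact hface ℓ (a ℓ) (by rw [ha]; simp [abs_of_pos hR])
    _ = 2 * (n + 1 : ℕ) * (2 * R) ^ (n + 1 - 1) * M := by
        rw [Finset.sum_const, Finset.card_univ, Fintype.card_fin]
        simp only [Nat.add_sub_cancel]
        push_cast
        ring
end
end

section
/- Let d ≥ 1, γ > 0, η > 0 and B > 1. Let g : ℝ^d → ℂ be a bounded measurable function and suppose there are measurable functions g_y : ℝ^d → ℂ for y ∈ ℕ, and constants K > 0, C > 0 and y₀ ∈ ℕ, such that for every y ≥ y₀: (i) sup_{t ∈ ℝ^d} |g(t) − g_y(t)| ≤ K e^{−ηy/2}, and (ii) for every λ ∈ ℝ^d with 0 < ‖λ‖ ≤ B and every R ≥ e^{ηy/γ}, |∫_{C_R(0)} e^{−2πi⟨λ,t⟩} g_y(t) dt| ≤ C R^{d−γ/2}. Then there exist C' > 0 and R₁ > 0 such that for every λ with 0 < ‖λ‖ ≤ B and every R > R₁, |∫_{C_R(0)} e^{−2πi⟨λ,t⟩} g(t) dt| ≤ C' R^{d−γ/2}. -/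
open MeasureTheory

noncomputable section

/-- Interpolation of twisted-integral bounds: if `g` is uniformly approximated by functions
`gs y` with error `K e^{-ηy/2}` and each `gs y` has twisted integrals bounded by
`C R^{d-γ/2}` for `R ≥ e^{ηy/γ}` and spectral parameters `0 < ‖λ‖ ≤ B`, then `g` itself has
twisted integrals bounded by `C' R^{d-γ/2}` for all large `R` and the same parameters. -/
theorem twisted_integral_interpolation
    {d : ℕ} (hd : 1 ≤ d) (γ η B : ℝ) (hγ : 0 < γ) (hη : 0 < η) (hB : 1 < B)
    (g : EuclideanSpace ℝ (Fin d) → ℂ) (hg : Measurable g) (hgb : ∃ M, ∀ t, ‖g t‖ ≤ M)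
    (gs : ℕ → EuclideanSpace ℝ (Fin d) → ℂ) (hgs : ∀ y, Measurable (gs y))
    (K C : ℝ) (hK : 0 < K) (hC : 0 < C) (y₀ : ℕ)
    (happrox : ∀ y, y₀ ≤ y → ∀ t, ‖g t - gs y t‖ ≤ K * Real.exp (-(η * y) / 2))
    (htwist : ∀ y, y₀ ≤ y → ∀ lam : EuclideanSpace ℝ (Fin d), 0 < ‖lam‖ → ‖lam‖ ≤ B →
      ∀ R : ℝ, Real.exp (η * y / γ) ≤ R →
        ‖∫ t in cube d R,
            Complex.exp (-(2 * Real.pi * Complex.I) * ((∑ i, lam i * t i : ℝ) : ℂ))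
              * gs y t‖
          ≤ C * R ^ ((d : ℝ) - γ / 2)) :
    ∃ C' > 0, ∃ R₁ > 0, ∀ lam : EuclideanSpace ℝ (Fin d), 0 < ‖lam‖ → ‖lam‖ ≤ B →
      ∀ R : ℝ, R₁ < R →
        ‖∫ t in cube d R,
            Complex.exp (-(2 * Real.pi * Complex.I) * ((∑ i, lam i * t i : ℝ) : ℂ))
              * g t‖
          ≤ C' * R ^ ((d : ℝ) - γ / 2) := by
  classical
  obtain ⟨M, hM⟩ := hgb
  refine ⟨C + K * Real.exp (η / 2) * 2 ^ d, by positivity,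
    Real.exp (η * (y₀ + 1) / γ), Real.exp_pos _, ?_⟩
  intro lam hl1 hl2 R hR
  have hR1 : 1 ≤ R := le_of_lt (lt_of_le_of_lt (Real.one_le_exp (by positivity)) hR)
  have hR0 : 0 < R := by linarith
  have hlogR : η * (y₀ + 1) / γ < Real.log R := by
    have := Real.log_lt_log (Real.exp_pos _) hR
    rwa [Real.log_exp] at this
  set x : ℝ := γ * Real.log R / η with hxdef
  have hx1 : (y₀ : ℝ) + 1 < x := by
    rw [hxdef, lt_div_iff₀ hη]
    rw [div_lt_iff₀ hγ] at hlogR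
    nlinarith
  have hx0 : 0 ≤ x := le_of_lt (lt_of_le_of_lt (by positivity) hx1)
  set y : ℕ := ⌊x⌋₊ with hydef
  have hy₀ : y₀ ≤ y := by
    have h : ((y₀ + 1 : ℕ) : ℝ) ≤ x := by push_cast; linarith
    have := Nat.le_floor h
    omega
  have hyx : (y : ℝ) ≤ x := Nat.floor_le hx0
  have hxy : x - 1 < (y : ℝ) := by
    have := Nat.lt_floor_add_one x; linarith
  -- the cube and its volume
  have hset : cube d R = (MeasurableEquiv.toLp 2 (Fin d → ℝ)).symm ⁻¹'
      (Set.univ.pi fun _ : Fin d => Set.Icc (-R) R) := by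
    ext t
    simp [cube, abs_le, Set.mem_pi, Pi.le_def, forall_and]
  have hcm : MeasurableSet (cube d R) := by
    rw [hset]
    exact (MeasurableEquiv.toLp 2 (Fin d → ℝ)).symm.measurable
      (MeasurableSet.univ_pi fun _ => measurableSet_Icc)
  have hvol : volume (cube d R) = (ENNReal.ofReal (2 * R)) ^ d := by
    rw [hset, (EuclideanSpace.volume_preserving_symm_measurableEquiv_toLp (Fin d)).measure_preimage
      (MeasurableSet.univ_pi fun _ => measurableSet_Icc).nullMeasurableSet]
    rw [volume_pi_pi]
    simp [Real.volume_Icc]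
    rw [two_mul, ENNReal.ofReal_add hR0.le hR0.le]
  have hvol_lt : volume (cube d R) < ⊤ := by
    rw [hvol]; exact ENNReal.pow_lt_top ENNReal.ofReal_lt_top
  have hvolR : (volume (cube d R)).toReal = (2 * R) ^ d := by
    rw [hvol, ENNReal.toReal_pow, ENNReal.toReal_ofReal (by positivity)]
  -- the twisted phase
  set e : EuclideanSpace ℝ (Fin d) → ℂ := fun t =>
    Complex.exp (-(2 * Real.pi * Complex.I) * ((∑ i, lam i * t i : ℝ) : ℂ)) with hedef
  have he : ∀ t, ‖e t‖ = 1 := by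
    intro t
    rw [hedef, Complex.norm_exp]
    simp
  have hem : Measurable e := by
    apply Complex.measurable_exp.comp
    apply Measurable.const_mul
    apply Complex.measurable_ofReal.comp
    exact Finset.measurable_sum _ fun i _ =>
      (measurable_const.mul ((measurable_pi_apply i).comp (WithLp.measurable_ofLp 2 _)))
  set ε : ℝ := K * Real.exp (-(η * y) / 2) with hεdef
  -- integrability
  have hint2 : IntegrableOn (fun t => e t * (g t - gs y t)) (cube d R) volume := by
    apply Measure.integrableOn_of_bounded hvol_lt.ne
      ((hem.mul ((hg.sub (hgs y)))).aestronglyMeasurable) (M := ε)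
    filter_upwards with t
    simp only [Pi.mul_apply, Pi.sub_apply]
    rw [norm_mul, he t, one_mul]
    exact happrox y hy₀ t
  have hint1 : IntegrableOn (fun t => e t * gs y t) (cube d R) volume := by
    apply Measure.integrableOn_of_bounded hvol_lt.ne
      ((hem.mul (hgs y)).aestronglyMeasurable) (M := M + ε)
    filter_upwards with t
    simp only [Pi.mul_apply, Pi.sub_apply]
    rw [norm_mul, he t, one_mul]
    calc ‖gs y t‖ = ‖g t - (g t - gs y t)‖ := by ring_nf
      _ ≤ ‖g t‖ + ‖g t - gs y t‖ := norm_sub_le _ _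
      _ ≤ M + ε := add_le_add (hM t) (happrox y hy₀ t)
  -- splitting
  have hsplit : (fun t => e t * g t)
      = fun t => e t * gs y t + e t * (g t - gs y t) := by
    funext t; ring
  have hRexp : Real.exp (η * y / γ) ≤ R := by
    have h1 : η * y / γ ≤ Real.log R := by
      rw [div_le_iff₀ hγ]
      have : η * x = Real.log R * γ := by rw [hxdef]; field_simp
      nlinarith [mul_le_mul_of_nonneg_left hyx hη.le]
    calc Real.exp (η * y / γ) ≤ Real.exp (Real.log R) := Real.exp_le_exp.mpr h1
      _ = R := Real.exp_log hR0
  have hbound1 : ‖∫ t in cube d R, e t * gs y t‖ ≤ C * R ^ ((d : ℝ) - γ / 2) :=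
    htwist y hy₀ lam hl1 hl2 R hRexp
  have hbound2 : ‖∫ t in cube d R, e t * (g t - gs y t)‖ ≤ ε * (2 * R) ^ d := by
    rw [← hvolR]
    apply norm_setIntegral_le_of_norm_le_const hvol_lt
    · intro t _
      rw [norm_mul, he t, one_mul]
      exact happrox y hy₀ t
  -- exponential bound on ε
  have hεb : ε ≤ K * Real.exp (η / 2) * R ^ (-(γ / 2)) := by
    rw [hεdef, Real.rpow_def_of_pos hR0, mul_assoc, ← Real.exp_add]
    apply mul_le_mul_of_nonneg_left _ hK.le
    apply Real.exp_le_exp.mpr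
    have hηx : η * x = γ * Real.log R := by rw [hxdef]; field_simp
    nlinarith [mul_lt_mul_of_pos_left hxy hη]
  -- final estimate
  have hrpow : R ^ (-(γ / 2)) * R ^ (d : ℝ) = R ^ ((d : ℝ) - γ / 2) := by
    rw [← Real.rpow_add hR0]; ring_nf
  calc ‖∫ t in cube d R, e t * g t‖
      = ‖(∫ t in cube d R, e t * gs y t) + ∫ t in cube d R, e t * (g t - gs y t)‖ := by
        rw [hsplit, integral_add hint1 hint2]
    _ ≤ ‖∫ t in cube d R, e t * gs y t‖ + ‖∫ t in cube d R, e t * (g t - gs y t)‖ :=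
        norm_add_le _ _
    _ ≤ C * R ^ ((d : ℝ) - γ / 2) + ε * (2 * R) ^ d := add_le_add hbound1 hbound2
    _ ≤ C * R ^ ((d : ℝ) - γ / 2)
        + (K * Real.exp (η / 2) * R ^ (-(γ / 2))) * (2 * R) ^ d := by
        have : (0:ℝ) ≤ (2 * R) ^ d := by positivity
        nlinarith
    _ = (C + K * Real.exp (η / 2) * 2 ^ d) * R ^ ((d : ℝ) - γ / 2) := by
        rw [mul_pow, ← hrpow, ← Real.rpow_natCast R d]
        ring
end
end

section
/- Let (Ω, μ) be a probability space carrying a measure-preserving measurable action φ of ℝ^d, let f ∈ L²(Ω, μ), and let ν be a spectral measure of f. Then for every R > 0, ∫_{C_R(0)} | ∫_Ω f(φ_t(ω)) · conj(f(ω)) dμ(ω) |² dt ≤ ‖f‖_{L²(μ)} · ∫_{ℝ^d} ( ∫_Ω |S_R(f, λ)(ω)|² dμ(ω) )^{1/2} dν(λ). -/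
open MeasureTheory

noncomputable section

namespace CorrAux

lemma ofReal_norm_eq_coe_nnnorm {E : Type*} [SeminormedAddCommGroup E] (a : E) :
    ENNReal.ofReal ‖a‖ = (‖a‖₊ : ENNReal) := ofReal_norm a

lemma _root_.Measurable.ennnorm {α : Type*} [MeasurableSpace α] {f : α → ℂ} (hf : Measurable f) :
    Measurable fun a => (‖f a‖₊ : ENNReal) := hf.enorm

lemma _root_.MeasureTheory.StronglyMeasurable.ennnorm {α : Type*} [MeasurableSpace α] {f : α → ℂ}
    (hf : StronglyMeasurable f) : Measurable fun a => (‖f a‖₊ : ENNReal) := hf.measurable.enorm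

lemma _root_.MeasureTheory.AEStronglyMeasurable.ennnorm {α : Type*} [MeasurableSpace α]
    {μ : Measure α} {f : α → ℂ} (hf : AEStronglyMeasurable f μ) :
    AEMeasurable (fun a => (‖f a‖₊ : ENNReal)) μ := hf.enorm

lemma ennnorm_integral_le_lintegral_ennnorm {α : Type*} [MeasurableSpace α] {μ : Measure α}
    (f : α → ℂ) : (‖∫ a, f a ∂μ‖₊ : ENNReal) ≤ ∫⁻ a, ‖f a‖₊ ∂μ :=
  enorm_integral_le_lintegral_enorm f

lemma cube_meas (d : ℕ) (R : ℝ) : MeasurableSet (cube d R) := by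
  have : cube d R = ⋂ i, {t : EuclideanSpace ℝ (Fin d) | |t i| ≤ R} := by
    ext t; simp [cube, Set.mem_iInter]
  rw [this]
  refine MeasurableSet.iInter fun i => ?_
  exact measurableSet_le (by fun_prop) measurable_const

lemma cube_vol (d : ℕ) (R : ℝ) : volume (cube d R) < ⊤ := by
  have hsub : cube d R ⊆ Metric.closedBall 0 (Real.sqrt d * |R|) := by
    intro t ht
    rw [Metric.mem_closedBall, dist_zero_right, EuclideanSpace.norm_eq]
    have : ∑ i, t i ^ 2 ≤ ∑ _i : Fin d, R ^ 2 := by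
      refine Finset.sum_le_sum fun i _ => ?_
      have := ht i
      nlinarith [abs_nonneg (t i), _root_.sq_abs (t i), _root_.sq_abs R]
    calc Real.sqrt (∑ i, ‖t i‖ ^ 2) ≤ Real.sqrt (d * R ^ 2) := by
          apply Real.sqrt_le_sqrt; simpa using this
      _ = Real.sqrt d * |R| := by
          rw [Real.sqrt_mul (by positivity), Real.sqrt_sq_eq_abs]
  exact lt_of_le_of_lt (measure_mono hsub) (isCompact_closedBall _ _).measure_lt_top

variable {Ω : Type} [MeasurableSpace Ω] {μ : Measure Ω}

lemma sqIntegral_eq {w : Ω → ℂ} (hw : AEStronglyMeasurable w μ) :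
    ∫ ω, ‖w ω‖ ^ 2 ∂μ = (∫⁻ ω, (‖w ω‖₊ : ENNReal) ^ 2 ∂μ).toReal := by
  rw [integral_eq_lintegral_of_nonneg_ae (Filter.Eventually.of_forall fun ω => sq_nonneg _)
    ((hw.norm.aemeasurable.pow_const 2).aestronglyMeasurable)]
  congr 1
  refine lintegral_congr fun ω => ?_
  rw [ENNReal.ofReal_pow (norm_nonneg _), ofReal_norm_eq_coe_nnnorm]

lemma lintegral_mul_le_sq (u v : Ω → ENNReal) (hu : AEMeasurable u μ) (hv : AEMeasurable v μ) :
    ∫⁻ ω, u ω * v ω ∂μ ≤ (∫⁻ ω, u ω ^ 2 ∂μ) ^ (1/2:ℝ) * (∫⁻ ω, v ω ^ 2 ∂μ) ^ (1/2:ℝ) := by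
  have := ENNReal.lintegral_mul_le_Lp_mul_Lq μ
    (Real.holderConjugate_iff_eq_conjExponent (by norm_num) |>.mpr (by norm_num) :
      Real.HolderConjugate 2 2) hu hv
  simp only [Pi.mul_apply] at this
  have hconv : ∀ w : Ω → ENNReal, ∫⁻ a, w a ^ (2:ℝ) ∂μ = ∫⁻ a, w a ^ 2 ∂μ := fun w =>
    lintegral_congr fun a => by rw [← ENNReal.rpow_natCast]; norm_num
  rw [hconv u, hconv v] at this
  exact this

lemma cauchy_schwarz_int {u v : Ω → ℂ} (hu : AEStronglyMeasurable u μ)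
    (hv : AEStronglyMeasurable v μ) (hu2 : ∫⁻ ω, (‖u ω‖₊ : ENNReal) ^ 2 ∂μ ≠ ⊤)
    (hv2 : ∫⁻ ω, (‖v ω‖₊ : ENNReal) ^ 2 ∂μ ≠ ⊤) :
    ‖∫ ω, u ω * (starRingEnd ℂ) (v ω) ∂μ‖
      ≤ Real.sqrt (∫ ω, ‖u ω‖ ^ 2 ∂μ) * Real.sqrt (∫ ω, ‖v ω‖ ^ 2 ∂μ) := by
  have h1 : ‖∫ ω, u ω * (starRingEnd ℂ) (v ω) ∂μ‖ ≤ ∫ ω, ‖u ω‖ * ‖v ω‖ ∂μ := by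
    refine le_trans (norm_integral_le_integral_norm _) (le_of_eq ?_)
    refine integral_congr_ae (Filter.Eventually.of_forall fun ω => ?_)
    simp [norm_mul]
  have h2 : ∫ ω, ‖u ω‖ * ‖v ω‖ ∂μ
      = (∫⁻ ω, (‖u ω‖₊ : ENNReal) * ‖v ω‖₊ ∂μ).toReal := by
    rw [integral_eq_lintegral_of_nonneg_ae (Filter.Eventually.of_forall fun ω =>
      mul_nonneg (norm_nonneg _) (norm_nonneg _)) (hu.norm.mul hv.norm)]
    congr 1
    refine lintegral_congr fun ω => ?_
    rw [ENNReal.ofReal_mul (norm_nonneg _), ofReal_norm_eq_coe_nnnorm, ofReal_norm_eq_coe_nnnorm]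
  have h3 := lintegral_mul_le_sq (fun ω => (‖u ω‖₊ : ENNReal)) (fun ω => (‖v ω‖₊ : ENNReal))
    hu.ennnorm hv.ennnorm
  have hne : (∫⁻ ω, (‖u ω‖₊ : ENNReal) ^ 2 ∂μ) ^ (1/2:ℝ)
      * (∫⁻ ω, (‖v ω‖₊ : ENNReal) ^ 2 ∂μ) ^ (1/2:ℝ) ≠ ⊤ :=
    ENNReal.mul_ne_top (ENNReal.rpow_ne_top_of_nonneg (by norm_num) hu2)
      (ENNReal.rpow_ne_top_of_nonneg (by norm_num) hv2)
  calc ‖∫ ω, u ω * (starRingEnd ℂ) (v ω) ∂μ‖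
      ≤ (∫⁻ ω, (‖u ω‖₊ : ENNReal) * ‖v ω‖₊ ∂μ).toReal := by rw [← h2]; exact h1
    _ ≤ ((∫⁻ ω, (‖u ω‖₊ : ENNReal) ^ 2 ∂μ) ^ (1/2:ℝ)
        * (∫⁻ ω, (‖v ω‖₊ : ENNReal) ^ 2 ∂μ) ^ (1/2:ℝ)).toReal := ENNReal.toReal_mono hne h3
    _ = _ := by
        rw [ENNReal.toReal_mul, sqIntegral_eq hu, sqIntegral_eq hv,
          Real.sqrt_eq_rpow, Real.sqrt_eq_rpow, ← ENNReal.toReal_rpow, ← ENNReal.toReal_rpow]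

end CorrAux

open CorrAux Complex in
/-- The square integral over the cube of the correlations `⟨f ∘ φ_t, f⟩` is bounded by
`‖f‖_{L²}` times the spectral-measure average of the `L²` norms of the twisted ergodic
integrals over all spectral parameters `λ`. -/
theorem correlation_square_integral_le_spectral_average
    {d : ℕ} (hd : 1 ≤ d)
    {Ω : Type} [MeasurableSpace Ω] (μ : Measure Ω) [IsProbabilityMeasure μ]
    (φ : EuclideanSpace ℝ (Fin d) → Ω → Ω)
    (hφ0 : φ 0 = id)
    (hφadd : ∀ s t, φ (s + t) = φ s ∘ φ t)
    (hφmeas : Measurable fun p : EuclideanSpace ℝ (Fin d) × Ω => φ p.1 p.2)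
    (hφpres : ∀ t, MeasurePreserving (φ t) μ μ)
    (f : Ω → ℂ) (hf : MemLp f 2 μ)
    (ν : Measure (EuclideanSpace ℝ (Fin d))) [IsFiniteMeasure ν]
    (hspec : ∀ t : EuclideanSpace ℝ (Fin d),
      ∫ ω, f (φ t ω) * (starRingEnd ℂ) (f ω) ∂μ
        = ∫ z, Complex.exp (2 * Real.pi * Complex.I * ((∑ i, t i * z i : ℝ) : ℂ)) ∂ν)
    (R : ℝ) (hR : 0 < R) :
    (∫ t in cube d R, ‖∫ ω, f (φ t ω) * (starRingEnd ℂ) (f ω) ∂μ‖ ^ 2)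
      ≤ Real.sqrt (∫ ω, ‖f ω‖ ^ 2 ∂μ) *
        ∫ lam, Real.sqrt (∫ ω, ‖∫ t in cube d R,
            Complex.exp (-(2 * Real.pi * Complex.I) * ((∑ i, lam i * t i : ℝ) : ℂ))
              * f (φ t ω)‖ ^ 2 ∂μ) ∂ν := by
  classical
  set ρ : Measure (EuclideanSpace ℝ (Fin d)) := volume.restrict (cube d R) with hρ
  haveI : IsFiniteMeasure ρ := ⟨by
    rw [Measure.restrict_apply_univ]; exact cube_vol d R⟩
  -- measurable representative
  set g : Ω → ℂ := hf.1.mk f with hgdef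
  have hg : StronglyMeasurable g := hf.1.stronglyMeasurable_mk
  have hfg : f =ᵐ[μ] g := hf.1.ae_eq_mk
  -- the exponential kernel
  set e : EuclideanSpace ℝ (Fin d) → EuclideanSpace ℝ (Fin d) → ℂ := fun lam t =>
    Complex.exp (-(2 * Real.pi * Complex.I) * ((∑ i, lam i * t i : ℝ) : ℂ)) with hedef
  have he_norm : ∀ lam t, ‖e lam t‖ = 1 := by
    intro lam t
    rw [hedef]
    rw [Complex.norm_exp]
    simp
  have he_cont : Continuous fun p : EuclideanSpace ℝ (Fin d) × EuclideanSpace ℝ (Fin d) => e p.1 p.2 := by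
    rw [hedef]
    refine Complex.continuous_exp.comp ?_
    refine Continuous.mul continuous_const ?_
    refine Complex.continuous_ofReal.comp ?_
    refine continuous_finset_sum _ fun i _ => ?_
    fun_prop
  -- the correlation function defined via the spectral measure
  set c : EuclideanSpace ℝ (Fin d) → ℂ := fun t => ∫ z, Complex.exp (2 * Real.pi * Complex.I
      * ((∑ i, t i * z i : ℝ) : ℂ)) ∂ν with hcdef
  -- twisted integrals with respect to g
  set S : EuclideanSpace ℝ (Fin d) → Ω → ℂ := fun lam ω => ∫ t, e lam t * g (φ t ω) ∂ρ with hSdef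
  -- joint measurability of S
  have hg_me : Measurable g := hg.measurable
  have hSmeas : StronglyMeasurable (fun p : EuclideanSpace ℝ (Fin d) × Ω => S p.1 p.2) := by
    have hF : StronglyMeasurable (fun q : (EuclideanSpace ℝ (Fin d) × Ω) × EuclideanSpace ℝ (Fin d) => e q.1.1 q.2 * g (φ q.2 q.1.2)) := by
      refine StronglyMeasurable.mul ?_ ?_
      · exact ((he_cont.measurable).comp
          (measurable_fst.fst.prodMk measurable_snd)).stronglyMeasurable
      · exact (hg_me.comp (hφmeas.comp
          (measurable_snd.prodMk measurable_fst.snd))).stronglyMeasurable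
    exact hF.integral_prod_right'
  -- L² mass of g
  set B : ENNReal := ∫⁻ ω, (‖g ω‖₊ : ENNReal) ^ 2 ∂μ with hBdef
  have hB : B ≠ ⊤ := by
    have hgL2 : MemLp g 2 μ := hf.ae_eq hfg
    have h2 := hgL2.2
    rw [eLpNorm_eq_lintegral_rpow_enorm_toReal (by norm_num) (by norm_num)] at h2
    have hconv : ∫⁻ ω, (‖g ω‖₊ : ENNReal) ^ ((2:ENNReal).toReal) ∂μ = B := by
      rw [hBdef]
      refine lintegral_congr fun a => ?_
      rw [← ENNReal.rpow_natCast]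
      norm_num
    rw [show (∫⁻ x, ‖g x‖ₑ ^ (2:ENNReal).toReal ∂μ) = B from hconv] at h2
    intro hB'
    rw [hB'] at h2
    simp [ENNReal.top_rpow_of_pos] at h2
  have hgφ : ∀ t : EuclideanSpace ℝ (Fin d), ∫⁻ ω, (‖g (φ t ω)‖₊ : ENNReal) ^ 2 ∂μ = B := fun t => by
    rw [hBdef]; exact (hφpres t).lintegral_comp (hg_me.ennnorm.pow_const 2)
  -- half-power helper
  have hsq : ∀ x : ENNReal, (x ^ (1/2:ℝ)) ^ 2 = x := fun x => by
    rw [← ENNReal.rpow_natCast (x ^ (1/2:ℝ)) 2, ← ENNReal.rpow_mul]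
    norm_num
  -- key quantitative bound for S
  have KB : ∀ lam : EuclideanSpace ℝ (Fin d), ∫⁻ ω, (‖S lam ω‖₊ : ENNReal) ^ 2 ∂μ ≤ ρ Set.univ ^ 2 * B := by
    intro lam
    have step1 : ∀ ω, (‖S lam ω‖₊ : ENNReal) ≤ ∫⁻ t, (‖g (φ t ω)‖₊ : ENNReal) ∂ρ := by
      intro ω
      refine le_trans (ennnorm_integral_le_lintegral_ennnorm _) (le_of_eq ?_)
      refine lintegral_congr fun t => ?_
      have h1 : (‖e lam t‖₊ : ENNReal) = 1 := by
        rw [← ofReal_norm_eq_coe_nnnorm, he_norm, ENNReal.ofReal_one]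
      rw [nnnorm_mul, ENNReal.coe_mul, h1, one_mul]
    have step2 : ∀ ω, (∫⁻ t, (‖g (φ t ω)‖₊ : ENNReal) ∂ρ) ^ 2
        ≤ ρ Set.univ * ∫⁻ t, (‖g (φ t ω)‖₊ : ENNReal) ^ 2 ∂ρ := by
      intro ω
      have hmeas : AEMeasurable (fun t => (‖g (φ t ω)‖₊ : ENNReal)) ρ := by
        exact (hg_me.ennnorm.comp (hφmeas.comp (measurable_id.prodMk measurable_const))).aemeasurable
      have := lintegral_mul_le_sq (μ := ρ) (fun t => (‖g (φ t ω)‖₊ : ENNReal)) (fun _ => 1)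
        hmeas aemeasurable_const
      simp only [mul_one, one_pow, one_mul, lintegral_const] at this
      calc (∫⁻ t, (‖g (φ t ω)‖₊ : ENNReal) ∂ρ) ^ 2
          ≤ ((∫⁻ t, (‖g (φ t ω)‖₊ : ENNReal) ^ 2 ∂ρ) ^ (1/2:ℝ) * (ρ Set.univ) ^ (1/2:ℝ)) ^ 2 := by
            exact pow_le_pow_left' this 2
        _ = ρ Set.univ * ∫⁻ t, (‖g (φ t ω)‖₊ : ENNReal) ^ 2 ∂ρ := by
            rw [mul_pow, hsq, hsq, mul_comm]
    have swap : ∫⁻ ω, ∫⁻ t, (‖g (φ t ω)‖₊ : ENNReal) ^ 2 ∂ρ ∂μ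
        = ∫⁻ t, ∫⁻ ω, (‖g (φ t ω)‖₊ : ENNReal) ^ 2 ∂μ ∂ρ := by
      refine lintegral_lintegral_swap ?_
      exact ((hg_me.comp (hφmeas.comp (measurable_snd.prodMk measurable_fst))).ennnorm.pow_const
        2).aemeasurable
    calc ∫⁻ ω, (‖S lam ω‖₊ : ENNReal) ^ 2 ∂μ
        ≤ ∫⁻ ω, (∫⁻ t, (‖g (φ t ω)‖₊ : ENNReal) ∂ρ) ^ 2 ∂μ := by
          exact lintegral_mono fun ω => pow_le_pow_left' (step1 ω) 2
      _ ≤ ∫⁻ ω, ρ Set.univ * ∫⁻ t, (‖g (φ t ω)‖₊ : ENNReal) ^ 2 ∂ρ ∂μ :=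
          lintegral_mono fun ω => step2 ω
      _ = ρ Set.univ * ∫⁻ ω, ∫⁻ t, (‖g (φ t ω)‖₊ : ENNReal) ^ 2 ∂ρ ∂μ :=
          lintegral_const_mul' _ _ (measure_ne_top ρ _)
      _ = ρ Set.univ * ∫⁻ t, ∫⁻ ω, (‖g (φ t ω)‖₊ : ENNReal) ^ 2 ∂μ ∂ρ := by rw [swap]
      _ = ρ Set.univ ^ 2 * B := by
          simp only [hgφ]
          rw [lintegral_const, sq]
          ring
  have hρB : ρ Set.univ ^ 2 * B ≠ ⊤ :=
    ENNReal.mul_ne_top (by simp [pow_two, ENNReal.mul_ne_top, measure_ne_top]) hB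
  -- boundedness of c
  have hexp_norm : ∀ x : ℝ, ‖Complex.exp (2 * Real.pi * Complex.I * (x:ℂ))‖ = 1 := by
    intro x; rw [Complex.norm_exp]; simp
  have hc_bound : ∀ t, ‖c t‖ ≤ (ν Set.univ).toReal := by
    intro t
    rw [hcdef]
    refine le_trans (norm_integral_le_integral_norm _) ?_
    simp only [hexp_norm]
    simp
    exact le_rfl
  have hc_meas : StronglyMeasurable c := by
    rw [hcdef]
    refine StronglyMeasurable.integral_prod_right' (f := fun q :
      EuclideanSpace ℝ (Fin d) × EuclideanSpace ℝ (Fin d) =>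
        Complex.exp (2 * Real.pi * Complex.I * ((∑ i, q.1 i * q.2 i : ℝ) : ℂ))) ?_
    refine Continuous.stronglyMeasurable ?_
    refine Complex.continuous_exp.comp ?_
    refine Continuous.mul continuous_const ?_
    refine Complex.continuous_ofReal.comp ?_
    refine continuous_finset_sum _ fun i _ => ?_
    fun_prop
  -- correlation via g
  have hcomp_ae : ∀ t : EuclideanSpace ℝ (Fin d),
      (fun ω => f (φ t ω)) =ᵐ[μ] fun ω => g (φ t ω) := by
    intro t
    have h0 : f =ᵐ[μ.map (φ t)] g := by rwa [(hφpres t).map_eq]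
    have := ae_eq_comp ((hφpres t).measurable.aemeasurable) h0
    exact this
  have hcg : ∀ t, ∫ ω, g (φ t ω) * (starRingEnd ℂ) (g ω) ∂μ = c t := by
    intro t
    have heq : ∫ ω, f (φ t ω) * (starRingEnd ℂ) (f ω) ∂μ
        = ∫ ω, g (φ t ω) * (starRingEnd ℂ) (g ω) ∂μ := by
      refine integral_congr_ae ?_
      filter_upwards [hfg, hcomp_ae t] with ω h1 h2
      rw [h1, h2]
    simp only [hcdef]
    rw [← hspec t]
    exact heq.symm
  -- conjugate of c
  have hconj : ∀ t, (starRingEnd ℂ) (c t) = ∫ z, e z t ∂ν := by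
    intro t
    simp only [hcdef]
    rw [← integral_conj]
    refine integral_congr_ae (Filter.Eventually.of_forall fun z => ?_)
    simp only [hedef]
    rw [← Complex.exp_conj]
    congr 1
    have hsum : (∑ i, t i * z i : ℝ) = (∑ i, z i * t i : ℝ) :=
      Finset.sum_congr rfl fun i _ => mul_comm _ _
    have hxy : ((∑ i, z i * t i : ℝ) : ℂ) = ((∑ i, t i * z i : ℝ) : ℂ) := by
      rw [hsum]
    rw [hxy]
    simp only [map_mul, Complex.conj_I, Complex.conj_ofReal, map_ofNat]
    ring
  -- Fubini over cube × Ω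
  have HInt : ∀ lam : EuclideanSpace ℝ (Fin d), Integrable
      (Function.uncurry fun t ω => e lam t * (g (φ t ω) * (starRingEnd ℂ) (g ω))) (ρ.prod μ) := by
    intro lam
    constructor
    · refine StronglyMeasurable.aestronglyMeasurable ?_
      refine StronglyMeasurable.mul ?_ (StronglyMeasurable.mul ?_ ?_)
      · exact (he_cont.measurable.comp (measurable_const.prodMk measurable_fst)).stronglyMeasurable
      · exact (hg_me.comp hφmeas).stronglyMeasurable
      · exact (continuous_star.measurable.comp
          (hg_me.comp measurable_snd)).stronglyMeasurable
    · have hsm : StronglyMeasurable (Function.uncurry fun (t : EuclideanSpace ℝ (Fin d)) ω =>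
          e lam t * (g (φ t ω) * (starRingEnd ℂ) (g ω))) := by
        refine StronglyMeasurable.mul ?_ (StronglyMeasurable.mul ?_ ?_)
        · exact (he_cont.measurable.comp
            (measurable_const.prodMk measurable_fst)).stronglyMeasurable
        · exact (hg_me.comp hφmeas).stronglyMeasurable
        · exact (continuous_star.measurable.comp (hg_me.comp measurable_snd)).stronglyMeasurable
      rw [HasFiniteIntegral]
      have heq : ∫⁻ q, ‖(Function.uncurry fun t ω =>
          e lam t * (g (φ t ω) * (starRingEnd ℂ) (g ω))) q‖₊ ∂(ρ.prod μ)
          = ∫⁻ t, ∫⁻ ω, (‖g (φ t ω)‖₊ : ENNReal) * ‖g ω‖₊ ∂μ ∂ρ := by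
        rw [lintegral_prod _ hsm.ennnorm.aemeasurable]
        refine lintegral_congr fun t => lintegral_congr fun ω => ?_
        have h1 : (‖e lam t‖₊ : ENNReal) = 1 := by
          rw [← ofReal_norm_eq_coe_nnnorm, he_norm, ENNReal.ofReal_one]
        simp only [Function.uncurry_apply_pair]
        rw [nnnorm_mul, nnnorm_mul, ENNReal.coe_mul, ENNReal.coe_mul, h1, one_mul]
        congr 2
        exact nnnorm_star _
      rw [show (∫⁻ a, ‖Function.uncurry (fun t ω => e lam t * (g (φ t ω) * (starRingEnd ℂ) (g ω))) a‖ₑ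
        ∂(ρ.prod μ)) = _ from heq]
      have hbound : ∀ t : EuclideanSpace ℝ (Fin d),
          ∫⁻ ω, (‖g (φ t ω)‖₊ : ENNReal) * ‖g ω‖₊ ∂μ ≤ B := by
        intro t
        refine le_trans (lintegral_mul_le_sq _ _
          ((hg_me.comp ((hφpres t).measurable)).ennnorm.aemeasurable)
          (hg_me.ennnorm.aemeasurable)) ?_
        rw [hgφ t]
        rw [← hBdef]
        refine le_of_eq ?_
        rw [← sq, hsq]
      calc ∫⁻ t, ∫⁻ ω, (‖g (φ t ω)‖₊ : ENNReal) * ‖g ω‖₊ ∂μ ∂ρ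
          ≤ ∫⁻ _t, B ∂ρ := lintegral_mono hbound
        _ = ρ Set.univ * B := by rw [lintegral_const]; ring
        _ < ⊤ := ENNReal.mul_lt_top (measure_ne_top ρ _).lt_top hB.lt_top
  have F2 : ∀ lam : EuclideanSpace ℝ (Fin d),
      ∫ t, e lam t * (∫ ω, g (φ t ω) * (starRingEnd ℂ) (g ω) ∂μ) ∂ρ
        = ∫ ω, S lam ω * (starRingEnd ℂ) (g ω) ∂μ := by
    intro lam
    have h1 : ∫ t, e lam t * (∫ ω, g (φ t ω) * (starRingEnd ℂ) (g ω) ∂μ) ∂ρ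
        = ∫ t, ∫ ω, e lam t * (g (φ t ω) * (starRingEnd ℂ) (g ω)) ∂μ ∂ρ := by
      refine integral_congr_ae (Filter.Eventually.of_forall fun t => ?_)
      simp only [integral_const_mul]
    rw [h1, integral_integral_swap (HInt lam)]
    refine integral_congr_ae (Filter.Eventually.of_forall fun ω => ?_)
    simp only [hSdef, ← integral_mul_const]
    refine integral_congr_ae (Filter.Eventually.of_forall fun t => ?_)
    ring
  -- Fubini over cube × ν
  have FInt : Integrable (Function.uncurry fun (t : EuclideanSpace ℝ (Fin d)) z => c t * e z t)
      (ρ.prod ν) := by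
    refine Integrable.mono' (integrable_const ((ν Set.univ).toReal)) ?_ ?_
    · refine StronglyMeasurable.aestronglyMeasurable ?_
      refine StronglyMeasurable.mul ?_ ?_
      · exact hc_meas.comp_measurable measurable_fst
      · exact (he_cont.measurable.comp (measurable_snd.prodMk measurable_fst)).stronglyMeasurable
    · refine Filter.Eventually.of_forall fun q => ?_
      rw [Function.uncurry_apply_pair, norm_mul, he_norm, mul_one]
      exact hc_bound q.1
  have F1 : ∫ t, ∫ z, c t * e z t ∂ν ∂ρ = ∫ z, ∫ t, c t * e z t ∂ρ ∂ν :=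
    integral_integral_swap FInt
  -- a.e. agreement of the twisted integrals of f and g
  have PN : ∀ᵐ ω ∂μ, ∀ lam : EuclideanSpace ℝ (Fin d),
      (∫ t, e lam t * f (φ t ω) ∂ρ) = S lam ω := by
    set N : Set Ω := toMeasurable μ {ω | f ω ≠ g ω} with hNdef
    have hNm : MeasurableSet N := measurableSet_toMeasurable _ _
    have hNnull : μ N = 0 := by
      rw [hNdef, measure_toMeasurable]
      exact ae_iff.mp hfg
    have hAm : MeasurableSet {q : EuclideanSpace ℝ (Fin d) × Ω | φ q.1 q.2 ∈ N} := hφmeas hNm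
    have hA0 : (ρ.prod μ) {q : EuclideanSpace ℝ (Fin d) × Ω | φ q.1 q.2 ∈ N} = 0 := by
      rw [Measure.prod_apply hAm]
      have hz : ∀ t : EuclideanSpace ℝ (Fin d), μ {a | φ t a ∈ N} = 0 := by
        intro t
        have hpre : {a | φ t a ∈ N} = φ t ⁻¹' N := rfl
        rw [hpre, (hφpres t).measure_preimage hNm.nullMeasurableSet]
        exact hNnull
      simp [hz]
    have hSm : MeasurableSet {p : Ω × EuclideanSpace ℝ (Fin d) | φ p.2 p.1 ∈ N} :=
      measurable_swap hAm
    have hB0 : (μ.prod ρ) {p : Ω × EuclideanSpace ℝ (Fin d) | φ p.2 p.1 ∈ N} = 0 := by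
      rw [← Measure.prod_swap, Measure.map_apply measurable_swap hSm]
      exact hA0
    have hae : ∀ᵐ p ∂(μ.prod ρ), φ p.2 p.1 ∉ N := by
      rw [ae_iff]
      convert hB0 using 2
      simp
    have h2 := Measure.ae_ae_of_ae_prod hae
    filter_upwards [h2] with ω hω
    intro lam
    simp only [hSdef]
    refine integral_congr_ae ?_
    filter_upwards [hω] with t ht
    have hfgt : f (φ t ω) = g (φ t ω) := by
      by_contra hcne
      exact ht (subset_toMeasurable μ _ hcne)
    rw [hfgt]
  -- transfer of the ω-integrals from f to g
  have hL2fg : ∫ ω, ‖f ω‖ ^ 2 ∂μ = ∫ ω, ‖g ω‖ ^ 2 ∂μ :=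
    integral_congr_ae (by filter_upwards [hfg] with ω h; rw [h])
  have hSfg : ∀ lam : EuclideanSpace ℝ (Fin d),
      (∫ ω, ‖∫ t, e lam t * f (φ t ω) ∂ρ‖ ^ 2 ∂μ) = ∫ ω, ‖S lam ω‖ ^ 2 ∂μ :=
    fun lam => integral_congr_ae (by filter_upwards [PN] with ω h; rw [h lam])
  -- measurability facts for the ν-integral
  have hSaesm : ∀ lam, AEStronglyMeasurable (S lam) μ := fun lam =>
    (hSmeas.comp_measurable (measurable_const.prodMk measurable_id)).aestronglyMeasurable
  have hCS : ∀ lam, ‖∫ ω, S lam ω * (starRingEnd ℂ) (g ω) ∂μ‖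
      ≤ Real.sqrt (∫ ω, ‖g ω‖ ^ 2 ∂μ) * Real.sqrt (∫ ω, ‖S lam ω‖ ^ 2 ∂μ) := by
    intro lam
    rw [mul_comm]
    exact cauchy_schwarz_int (hSaesm lam) hg.aestronglyMeasurable
      (ne_top_of_le_ne_top hρB (KB lam)) hB
  have hSq_meas : StronglyMeasurable fun lam => ∫ ω, ‖S lam ω‖ ^ 2 ∂μ := by
    refine StronglyMeasurable.integral_prod_right'
      (f := fun p : EuclideanSpace ℝ (Fin d) × Ω => ‖S p.1 p.2‖ ^ 2) ?_
    exact (hSmeas.measurable.norm.pow_const 2).stronglyMeasurable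
  have hsqb : ∀ lam, Real.sqrt (∫ ω, ‖S lam ω‖ ^ 2 ∂μ)
      ≤ Real.sqrt ((ρ Set.univ ^ 2 * B).toReal) := by
    intro lam
    apply Real.sqrt_le_sqrt
    rw [sqIntegral_eq (hSaesm lam)]
    exact ENNReal.toReal_mono hρB (KB lam)
  have hI_meas : StronglyMeasurable fun lam => ∫ ω, S lam ω * (starRingEnd ℂ) (g ω) ∂μ := by
    refine StronglyMeasurable.integral_prod_right'
      (f := fun p : EuclideanSpace ℝ (Fin d) × Ω => S p.1 p.2 * (starRingEnd ℂ) (g p.2)) ?_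
    exact hSmeas.mul
      ((continuous_star.measurable.comp (hg_me.comp measurable_snd)).stronglyMeasurable)
  set C0 : ℝ := Real.sqrt (∫ ω, ‖g ω‖ ^ 2 ∂μ) * Real.sqrt ((ρ Set.univ ^ 2 * B).toReal)
    with hC0def
  have int1 : Integrable (fun z => ‖∫ ω, S z ω * (starRingEnd ℂ) (g ω) ∂μ‖) ν := by
    refine Integrable.mono' (integrable_const C0) hI_meas.norm.aestronglyMeasurable ?_
    refine Filter.Eventually.of_forall fun z => ?_
    rw [norm_norm]
    exact le_trans (hCS z)
      (mul_le_mul_of_nonneg_left (hsqb z) (Real.sqrt_nonneg _))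
  have int2 : Integrable (fun z => Real.sqrt (∫ ω, ‖g ω‖ ^ 2 ∂μ)
      * Real.sqrt (∫ ω, ‖S z ω‖ ^ 2 ∂μ)) ν := by
    refine Integrable.mono' (integrable_const C0) ?_ ?_
    · exact ((Real.continuous_sqrt.comp_stronglyMeasurable hSq_meas).const_mul
        _).aestronglyMeasurable
    · refine Filter.Eventually.of_forall fun z => ?_
      rw [Real.norm_eq_abs, _root_.abs_of_nonneg (by positivity)]
      exact mul_le_mul_of_nonneg_left (hsqb z) (Real.sqrt_nonneg _)
  -- the main identity
  have hJC : ((∫ t, ‖c t‖ ^ 2 ∂ρ : ℝ) : ℂ)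
      = ∫ z, (∫ ω, S z ω * (starRingEnd ℂ) (g ω) ∂μ) ∂ν := by
    calc ((∫ t, ‖c t‖ ^ 2 ∂ρ : ℝ) : ℂ) = ∫ t, ((‖c t‖ ^ 2 : ℝ) : ℂ) ∂ρ := integral_ofReal.symm
      _ = ∫ t, c t * (starRingEnd ℂ) (c t) ∂ρ := by
          refine integral_congr_ae (Filter.Eventually.of_forall fun t => ?_)
          show ((‖c t‖ ^ 2 : ℝ) : ℂ) = c t * (starRingEnd ℂ) (c t)
          rw [Complex.mul_conj, Complex.normSq_eq_norm_sq]
      _ = ∫ t, ∫ z, c t * e z t ∂ν ∂ρ := by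
          refine integral_congr_ae (Filter.Eventually.of_forall fun t => ?_)
          show c t * (starRingEnd ℂ) (c t) = ∫ z, c t * e z t ∂ν
          rw [hconj t]
          exact (integral_const_mul _ _).symm
      _ = ∫ z, ∫ t, c t * e z t ∂ρ ∂ν := F1
      _ = ∫ z, (∫ ω, S z ω * (starRingEnd ℂ) (g ω) ∂μ) ∂ν := by
          refine integral_congr_ae (Filter.Eventually.of_forall fun z => ?_)
          show (∫ t, c t * e z t ∂ρ) = ∫ ω, S z ω * (starRingEnd ℂ) (g ω) ∂μ
          rw [← F2 z]
          refine integral_congr_ae (Filter.Eventually.of_forall fun t => ?_)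
          show c t * e z t = e z t * ∫ ω, g (φ t ω) * (starRingEnd ℂ) (g ω) ∂μ
          rw [hcg t]
          ring
  -- final chain
  simp only [hspec]
  show (∫ t, ‖c t‖ ^ 2 ∂ρ) ≤ Real.sqrt (∫ ω, ‖f ω‖ ^ 2 ∂μ) *
      ∫ lam, Real.sqrt (∫ ω, ‖∫ t, e lam t * f (φ t ω) ∂ρ‖ ^ 2 ∂μ) ∂ν
  rw [hL2fg]
  have hRHS : (∫ lam, Real.sqrt (∫ ω, ‖∫ t, e lam t * f (φ t ω) ∂ρ‖ ^ 2 ∂μ) ∂ν)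
      = ∫ lam, Real.sqrt (∫ ω, ‖S lam ω‖ ^ 2 ∂μ) ∂ν := by
    refine integral_congr_ae (Filter.Eventually.of_forall fun lam => ?_)
    show Real.sqrt (∫ ω, ‖∫ t, e lam t * f (φ t ω) ∂ρ‖ ^ 2 ∂μ)
      = Real.sqrt (∫ ω, ‖S lam ω‖ ^ 2 ∂μ)
    rw [hSfg lam]
  rw [hRHS]
  have hJ0 : 0 ≤ ∫ t, ‖c t‖ ^ 2 ∂ρ := integral_nonneg fun t => sq_nonneg _
  calc ∫ t, ‖c t‖ ^ 2 ∂ρ = ‖((∫ t, ‖c t‖ ^ 2 ∂ρ : ℝ) : ℂ)‖ := by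
        rw [Complex.norm_real, Real.norm_eq_abs, _root_.abs_of_nonneg hJ0]
    _ = ‖∫ z, (∫ ω, S z ω * (starRingEnd ℂ) (g ω) ∂μ) ∂ν‖ := by rw [hJC]
    _ ≤ ∫ z, ‖∫ ω, S z ω * (starRingEnd ℂ) (g ω) ∂μ‖ ∂ν := norm_integral_le_integral_norm _
    _ ≤ ∫ z, Real.sqrt (∫ ω, ‖g ω‖ ^ 2 ∂μ) * Real.sqrt (∫ ω, ‖S z ω‖ ^ 2 ∂μ) ∂ν :=
        integral_mono int1 int2 fun z => hCS z
    _ = Real.sqrt (∫ ω, ‖g ω‖ ^ 2 ∂μ) * ∫ z, Real.sqrt (∫ ω, ‖S z ω‖ ^ 2 ∂μ) ∂ν :=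
        integral_const_mul _ _

end
end
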